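/- Let β∖γ be a rook strip. All saturated chains between two fixed comparable elements in the poset of LR-fillings of type (α, β, γ) under ≤_box have the same length; specifically, the length of any saturated chain from Z up to X equals ℓ(π(Z)) − ℓ(π(X)), the difference of Coxeter lengths of the associated permutations. -/

import Mathlib

open Equiv

/-! ### Permutations: adjacent transpositions, Coxeter length, Bruhat order -/

/-- `s` is an adjacent transposition `(i, i+1)` in `S_n` (values `0`-indexed). -/
def IsAdjTrans {n : ℕ} (s : Perm (Fin n)) : Prop :=
  ∃ (i : ℕ) (h : i + 1 < n), s = Equiv.swap ⟨i, Nat.lt_of_succ_lt h⟩ ⟨i + 1, h⟩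

/-- Coxeter length: the minimal number of adjacent transpositions in a factorization. -/
noncomputable def permLength {n : ℕ} (x : Perm (Fin n)) : ℕ :=
  sInf {k | ∃ l : List (Perm (Fin n)), l.length = k ∧ (∀ s ∈ l, IsAdjTrans s) ∧ l.prod = x}

/-- Strict Bruhat order: generated by `u < t * u` for transpositions `t`
increasing the length. -/
def BruhatLT {n : ℕ} (x z : Perm (Fin n)) : Prop :=
  Relation.TransGen
    (fun u v => ∃ t : Perm (Fin n), t.IsSwap ∧ v = t * u ∧ permLength u < permLength v) x z

/-- Bruhat order (reflexive version). -/
def BruhatLE {n : ℕ} (x z : Perm (Fin n)) : Prop := x = z ∨ BruhatLT x z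

/-! ### Partitions -/

/-- A partition: an antitone, finitely supported function `ℕ → ℕ`
(the part `αᵢ` of the paper is `f (i-1)`; rows are `0`-indexed). -/
structure Partn where
  f : ℕ → ℕ
  antitone' : Antitone f
  finite_supp : ∃ N, ∀ i, N ≤ i → f i = 0

/-- `p` is a partition of `n`. -/
def PartnOf (p : Partn) (n : ℕ) : Prop :=
  ∃ N, (∀ i, N ≤ i → p.f i = 0) ∧ ∑ i ∈ Finset.range N, p.f i = n

/-- The partial sum `α₁ + ⋯ + α_j` of the first `j` parts. -/
def psum (p : Partn) (j : ℕ) : ℕ := ∑ i ∈ Finset.range j, p.f i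

/-- The set of block boundaries `α₁, α₁+α₂, …` (`1`-indexed positions). -/
def Bdry (p : Partn) : Set ℕ := {m | ∃ j, 1 ≤ j ∧ m = psum p j}

/-- `S^α`: permutations whose values within each block of `α` occur in increasing
order of position.  Values are `0`-indexed: value `v` is the paper's value `v+1`,
and `v`, `v+1` lie in the same block iff `v+1 ∉ Bdry α`. -/
def SAset (α : Partn) {n : ℕ} (x : Perm (Fin n)) : Prop :=
  ∀ (v : ℕ) (h : v + 1 < n), (v + 1) ∉ Bdry α →
    x⁻¹ ⟨v, Nat.lt_of_succ_lt h⟩ < x⁻¹ ⟨v + 1, h⟩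

/-- Containment of partitions. -/
def PartnSub (γ β : Partn) : Prop := ∀ i, γ.f i ≤ β.f i

/-- The transpose (conjugate) partition: `β'_j = #{i : βᵢ ≥ j}` (columns `0`-indexed). -/
noncomputable def ptranspose (p : Partn) (j : ℕ) : ℕ := Set.ncard {i | j < p.f i}

/-- `β∖γ` is a vertical strip: `βᵢ ≤ γᵢ + 1` for all `i`. -/
def VertStrip (β γ : Partn) : Prop := ∀ i, β.f i ≤ γ.f i + 1

/-- `β∖γ` is a horizontal strip: `β'∖γ'` is a vertical strip. -/
def HorizStrip (β γ : Partn) : Prop := ∀ j, ptranspose β j ≤ ptranspose γ j + 1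

/-- A rook strip is a horizontal and vertical strip. -/
def RookStrip (β γ : Partn) : Prop := VertStrip β γ ∧ HorizStrip β γ

/-- The boxes of the skew diagram `β∖γ` (row, column), `0`-indexed. -/
def SkewCells (β γ : Partn) : Set (ℕ × ℕ) := {c | γ.f c.1 ≤ c.2 ∧ c.2 < β.f c.1}

/-! ### Fillings of skew diagrams -/

/-- A filling of the skew diagram `β∖γ` with content `α`: each box gets an entry
`≥ 1`, and there are `α_u` entries equal to `u` (the paper's `αᵤ` is `α.f (u-1)`). -/
structure SkFilling (α β γ : Partn) where
  entry : ℕ × ℕ → ℕ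
  zero_outside : ∀ c, c ∉ SkewCells β γ → entry c = 0
  pos_inside : ∀ c ∈ SkewCells β γ, 1 ≤ entry c
  content : ∀ u : ℕ, 1 ≤ u → Set.ncard {c ∈ SkewCells β γ | entry c = u} = α.f (u - 1)

/-- The Littlewood–Richardson conditions: rows weakly increase, columns strictly
increase, and the lattice permutation property holds. -/
def IsLRF {α β γ : Partn} (F : SkFilling α β γ) : Prop :=
  (∀ i j j' : ℕ, (i, j) ∈ SkewCells β γ → (i, j') ∈ SkewCells β γ → j ≤ j' →
      F.entry (i, j) ≤ F.entry (i, j')) ∧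
  (∀ i i' j : ℕ, (i, j) ∈ SkewCells β γ → (i', j) ∈ SkewCells β γ → i < i' →
      F.entry (i, j) < F.entry (i', j)) ∧
  (∀ u c : ℕ, 2 ≤ u →
      Set.ncard {p ∈ SkewCells β γ | c ≤ p.2 ∧ F.entry p = u} ≤
      Set.ncard {p ∈ SkewCells β γ | c ≤ p.2 ∧ F.entry p = u - 1})

/-- Row `i` of the partition `γ⁽ᵘ⁾`: the boxes of `γ` together with the boxes of
`β∖γ` whose entry is at most `u`. -/
noncomputable def regionRow {α β γ : Partn} (F : SkFilling α β γ) (u i : ℕ) : ℕ :=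
  γ.f i + Set.ncard {j | (i, j) ∈ SkewCells β γ ∧ F.entry (i, j) ≤ u}

/-- Dominance order on fillings: `Z ≤_dom X` iff `δ⁽ᵘ⁾ ≤_dom γ⁽ᵘ⁾` for every `u`. -/
def DomLE {α β γ : Partn} (Z X : SkFilling α β γ) : Prop :=
  ∀ u j : ℕ, ∑ i ∈ Finset.range j, regionRow Z u i ≤ ∑ i ∈ Finset.range j, regionRow X u i

/-- A single sorting swap: exchange two out-of-order entries within a row
(left entry bigger) or within a column (upper entry bigger). -/
def SortSwap (β γ : Partn) (W Z : ℕ × ℕ → ℕ) : Prop :=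
  ∃ p q : ℕ × ℕ, p ∈ SkewCells β γ ∧ q ∈ SkewCells β γ ∧
    ((p.1 = q.1 ∧ p.2 < q.2) ∨ (p.2 = q.2 ∧ p.1 < q.1)) ∧
    W q < W p ∧
    Z = Function.update (Function.update W p (W q)) q (W p)

/-- `Z` is obtained from `X` by a decreasing box move: two entries of `X` are
exchanged so that the smaller entry is in the lower position after the exchange,
and then rows and columns are re-sorted if necessary. -/
def BoxMove {α β γ : Partn} (X Z : SkFilling α β γ) : Prop :=
  ∃ p q : ℕ × ℕ, p ∈ SkewCells β γ ∧ q ∈ SkewCells β γ ∧ p.1 < q.1 ∧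
    X.entry p < X.entry q ∧
    Relation.ReflTransGen (SortSwap β γ)
      (Function.update (Function.update X.entry p (X.entry q)) q (X.entry p)) Z.entry

/-- The box order on LR-fillings: generated by decreasing box moves. -/
def LeBox {α β γ : Partn} (Z X : SkFilling α β γ) : Prop :=
  Relation.ReflTransGen (fun Y W => IsLRF Y ∧ IsLRF W ∧ BoxMove W Y) Z X

/-! ### Reading words and standardization -/

/-- The block (paper entry, `1`-indexed) containing the `0`-indexed value `v`. -/
noncomputable def blockIdx (α : Partn) (v : ℕ) : ℕ := sInf {u | v < psum α u}

/-- `e` enumerates the boxes of the rook strip `β∖γ` from top right to bottom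
left, i.e. in increasing order of rows. -/
def IsRowRead (β γ : Partn) {n : ℕ} (e : Fin n → ℕ × ℕ) : Prop :=
  (∀ k, e k ∈ SkewCells β γ) ∧ Function.Injective e ∧
  (∀ c ∈ SkewCells β γ, ∃ k, e k = c) ∧
  ∀ k l : Fin n, k < l → (e k).1 < (e l).1

/-- `e` enumerates the boxes of `β∖γ` column by column from left to right, each
column read from bottom to top (the reading order of the word `ω`). -/
def IsColRead (β γ : Partn) {n : ℕ} (e : Fin n → ℕ × ℕ) : Prop :=
  (∀ k, e k ∈ SkewCells β γ) ∧ Function.Injective e ∧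
  (∀ c ∈ SkewCells β γ, ∃ k, e k = c) ∧
  ∀ k l : Fin n, k < l →
    (e k).2 < (e l).2 ∨ ((e k).2 = (e l).2 ∧ (e l).1 < (e k).1)

/-- `p` is the standardization `π(F)` of the reading word of the filling `F`
with respect to the reading enumeration `e`: position `k` receives a value in the
block corresponding to the entry of the `k`-th box, and equal entries receive
their values in reading order. -/
def IsStdOf (α : Partn) {β γ : Partn} {n : ℕ} (F : SkFilling α β γ)
    (e : Fin n → ℕ × ℕ) (p : Perm (Fin n)) : Prop :=
  (∀ k : Fin n, blockIdx α (p k) = F.entry (e k)) ∧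
  ∀ k l : Fin n, k < l → F.entry (e k) = F.entry (e l) → p k < p l

/-- The `α`-recording tableau of `x` is standard: the entries `x⁻¹(psum α u + j)`
increase along rows and down columns of the shape `α` (rows `0`-indexed). -/
def RecStd (α : Partn) {n : ℕ} (x : Perm (Fin n)) : Prop :=
  (∀ u j j' : ℕ, j < j' → j' < α.f u →
    ∀ (h : psum α u + j < n) (h' : psum α u + j' < n),
      x⁻¹ ⟨psum α u + j, h⟩ < x⁻¹ ⟨psum α u + j', h'⟩) ∧
  (∀ u u' j : ℕ, u < u' → j < α.f u' →
    ∀ (h : psum α u + j < n) (h' : psum α u' + j < n),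
      x⁻¹ ⟨psum α u + j, h⟩ < x⁻¹ ⟨psum α u' + j, h'⟩)

/-- Covering relation of the box order on LR-fillings. -/
def CovBox {α β γ : Partn} (X Y : SkFilling α β γ) : Prop :=
  IsLRF X ∧ IsLRF Y ∧ LeBox X Y ∧ X ≠ Y ∧
    ∀ W, IsLRF W → LeBox X W → LeBox W Y → W = X ∨ W = Y

/-- The decreasing block `(i, i-1, …, 1)`. -/
def descBlock (i : ℕ) : List ℕ := ((List.range i).reverse).map (· + 1)

namespace Aux

variable {n : ℕ}

/-- The inversion set of a permutation. -/
def invSet (p : Perm (Fin n)) : Finset (Fin n × Fin n) :=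
  Finset.univ.filter (fun z => z.1 < z.2 ∧ p z.2 < p z.1)

def inv (p : Perm (Fin n)) : ℕ := (invSet p).card

lemma mem_invSet {p : Perm (Fin n)} {z : Fin n × Fin n} :
    z ∈ invSet p ↔ z.1 < z.2 ∧ p z.2 < p z.1 := by
  simp [invSet]

lemma inv_one : inv (1 : Perm (Fin n)) = 0 := by
  simp only [inv, invSet, Perm.one_apply, Finset.card_eq_zero]
  apply Finset.filter_eq_empty_iff.mpr
  rintro ⟨i, j⟩ -
  simp only [not_and]
  intro h
  exact asymm h

lemma swap_adj_apply {v : ℕ} (h : v + 1 < n) (x : Fin n) :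
    ((Equiv.swap ⟨v, Nat.lt_of_succ_lt h⟩ ⟨v + 1, h⟩ x : Fin n) : ℕ) =
      if (x : ℕ) = v then v + 1 else if (x : ℕ) = v + 1 then v else x := by
  rw [Equiv.swap_apply_def]
  split_ifs with h1 h2 h3 h4 h5 <;>
    simp_all [Fin.ext_iff] <;> omega

lemma swap_adj_lt_iff {v : ℕ} (h : v + 1 < n) (x y : Fin n)
    (h1 : ¬((x : ℕ) = v ∧ (y : ℕ) = v + 1)) (h2 : ¬((x : ℕ) = v + 1 ∧ (y : ℕ) = v)) :
    Equiv.swap ⟨v, Nat.lt_of_succ_lt h⟩ ⟨v + 1, h⟩ x <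
      Equiv.swap ⟨v, Nat.lt_of_succ_lt h⟩ ⟨v + 1, h⟩ y ↔ x < y := by
  rw [Fin.lt_def, Fin.lt_def, swap_adj_apply h, swap_adj_apply h]
  split_ifs <;> omega

lemma inv_adj_mul_up {v : ℕ} (h : v + 1 < n) (x : Perm (Fin n))
    (hup : x⁻¹ ⟨v, Nat.lt_of_succ_lt h⟩ < x⁻¹ ⟨v + 1, h⟩) :
    inv (Equiv.swap ⟨v, Nat.lt_of_succ_lt h⟩ ⟨v + 1, h⟩ * x) = inv x + 1 := by
  set a : Fin n := ⟨v, Nat.lt_of_succ_lt h⟩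
  set b : Fin n := ⟨v + 1, h⟩
  have hab : a < b := by simp [a, b, Fin.lt_def]
  have key : invSet (Equiv.swap a b * x) = insert (x⁻¹ a, x⁻¹ b) (invSet x) := by
    ext ⟨i, j⟩
    simp only [mem_invSet, Finset.mem_insert, Perm.mul_apply, Prod.mk.injEq]
    constructor
    · rintro ⟨hij, hlt⟩
      by_cases hpair : i = x⁻¹ a ∧ j = x⁻¹ b
      · exact Or.inl hpair
      · refine Or.inr ⟨hij, ?_⟩
        rw [swap_adj_lt_iff h] at hlt
        · exact hlt
        · rintro ⟨hx1, hx2⟩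
          have hj : x j = a := Fin.ext hx1
          have hi : x i = b := Fin.ext hx2
          have hib : i = x⁻¹ b := by rw [← hi]; simp
          have hja : j = x⁻¹ a := by rw [← hj]; simp
          rw [hib, hja] at hij
          exact absurd hij (asymm hup)
        · rintro ⟨hx1, hx2⟩
          have hj : x j = b := Fin.ext hx1
          have hi : x i = a := Fin.ext hx2
          exact hpair ⟨by rw [← hi]; simp, by rw [← hj]; simp⟩
    · rintro (⟨rfl, rfl⟩ | ⟨hij, hlt⟩)
      · refine ⟨hup, ?_⟩
        simp only [Perm.inv_def, Equiv.apply_symm_apply, Equiv.symm_apply_apply]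
        rw [Equiv.swap_apply_left, Equiv.swap_apply_right]
        exact hab
      · refine ⟨hij, ?_⟩
        rw [swap_adj_lt_iff h]
        · exact hlt
        · rintro ⟨hx1, hx2⟩
          have hj : x j = a := Fin.ext hx1
          have hi : x i = b := Fin.ext hx2
          have hja : j = x⁻¹ a := by rw [← hj]; simp
          have hib : i = x⁻¹ b := by rw [← hi]; simp
          rw [hib, hja] at hij
          exact absurd hij (asymm hup)
        · rintro ⟨hx1, hx2⟩
          have hj : x j = b := Fin.ext hx1
          have hi : x i = a := Fin.ext hx2
          have hlt2 : x i < x j := by rw [hi, hj]; exact hab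
          exact absurd hlt (asymm hlt2)
  have hnotmem : (x⁻¹ a, x⁻¹ b) ∉ invSet x := by
    rw [mem_invSet]
    rintro ⟨-, hlt⟩
    simp only [Perm.inv_def, Equiv.apply_symm_apply, Equiv.symm_apply_apply] at hlt
    exact absurd hlt (asymm hab)
  rw [inv, inv, key, Finset.card_insert_of_notMem hnotmem]

lemma swap_mul_swap_adj {v : ℕ} (h : v + 1 < n) (x : Perm (Fin n)) :
    Equiv.swap ⟨v, Nat.lt_of_succ_lt h⟩ ⟨v + 1, h⟩ *
      (Equiv.swap ⟨v, Nat.lt_of_succ_lt h⟩ ⟨v + 1, h⟩ * x) = x := by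
  rw [← mul_assoc, Equiv.swap_mul_self, one_mul]

lemma inv_adj_mul_down {v : ℕ} (h : v + 1 < n) (x : Perm (Fin n))
    (hdn : x⁻¹ ⟨v + 1, h⟩ < x⁻¹ ⟨v, Nat.lt_of_succ_lt h⟩) :
    inv (Equiv.swap ⟨v, Nat.lt_of_succ_lt h⟩ ⟨v + 1, h⟩ * x) + 1 = inv x := by
  set s := Equiv.swap (⟨v, Nat.lt_of_succ_lt h⟩ : Fin n) ⟨v + 1, h⟩ with hs
  set y := s * x with hy
  have hyx : x = s * y := (swap_mul_swap_adj h x).symm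
  have h1 : y⁻¹ ⟨v, Nat.lt_of_succ_lt h⟩ < y⁻¹ ⟨v + 1, h⟩ := by
    have e1 : y⁻¹ (⟨v, Nat.lt_of_succ_lt h⟩ : Fin n) = x⁻¹ ⟨v + 1, h⟩ := by
      rw [hy, mul_inv_rev, Perm.mul_apply, hs, Equiv.swap_inv, Equiv.swap_apply_left]
    have e2 : y⁻¹ (⟨v + 1, h⟩ : Fin n) = x⁻¹ ⟨v, Nat.lt_of_succ_lt h⟩ := by
      rw [hy, mul_inv_rev, Perm.mul_apply, hs, Equiv.swap_inv, Equiv.swap_apply_right]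
    rw [e1, e2]; exact hdn
  have := inv_adj_mul_up h y h1
  rw [← hyx] at this
  rw [this]

lemma inv_list_prod_le (l : List (Perm (Fin n))) (hl : ∀ s ∈ l, IsAdjTrans s) :
    inv l.prod ≤ l.length := by
  induction l with
  | nil => simp [inv_one]
  | cons s t ih =>
    obtain ⟨v, h, rfl⟩ := hl s (List.mem_cons_self)
    have ht := ih (fun u hu => hl u (List.mem_cons_of_mem _ hu))
    rw [List.prod_cons, List.length_cons]
    set y := t.prod
    rcases lt_trichotomy (y⁻¹ ⟨v, Nat.lt_of_succ_lt h⟩) (y⁻¹ ⟨v + 1, h⟩) with hc | hc | hc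
    · rw [inv_adj_mul_up h y hc]; omega
    · exfalso
      have : (⟨v, Nat.lt_of_succ_lt h⟩ : Fin n) = ⟨v + 1, h⟩ := y⁻¹.injective hc
      simp [Fin.ext_iff] at this
    · have := inv_adj_mul_down h y hc; omega

lemma strictMono_perm_eq_one (x : Perm (Fin n)) (hx : StrictMono x) : x = 1 := by
  have hinv : StrictMono (⇑(x⁻¹ : Perm (Fin n))) := by
    intro i j hij
    rcases lt_trichotomy (x⁻¹ i) (x⁻¹ j) with hc | hc | hc
    · exact hc
    · have hij' : i = j := by
        have := congrArg x hc
        simpa using this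
      exact absurd hij' (ne_of_lt hij)
    · have h2 := hx hc
      simp only [Perm.inv_def, Equiv.apply_symm_apply, Equiv.symm_apply_apply] at h2
      exact absurd (hij.trans h2) (lt_irrefl _)
  haveI : WellFoundedLT (Fin n) := inferInstance
  have h1 : ∀ i : Fin n, i ≤ x i := fun i => hx.le_apply
  have h2 : ∀ i : Fin n, i ≤ x⁻¹ i := fun i => hinv.le_apply
  ext i
  have h3 := h2 (x i)
  simp only [Perm.inv_def, Equiv.apply_symm_apply, Equiv.symm_apply_apply] at h3
  have : x i = i := le_antisymm h3 (h1 i)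
  simpa using congrArg Fin.val this


lemma exists_descent (x : Perm (Fin n)) (hx : x ≠ 1) :
    ∃ (v : ℕ) (h : v + 1 < n), x⁻¹ ⟨v + 1, h⟩ < x⁻¹ ⟨v, Nat.lt_of_succ_lt h⟩ := by
  by_contra hcon
  push_neg at hcon
  apply hx
  apply strictMono_perm_eq_one
  have step : ∀ (v : ℕ) (h : v + 1 < n) (hv : v < n),
      x⁻¹ ⟨v, hv⟩ < x⁻¹ ⟨v + 1, h⟩ := by
    intro v h hv
    have hne : x⁻¹ (⟨v, hv⟩ : Fin n) ≠ x⁻¹ ⟨v + 1, h⟩ := by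
      intro hc
      have := x⁻¹.injective hc
      simp [Fin.ext_iff] at this
    exact lt_of_le_of_ne (hcon v h) hne
  have hmono : StrictMono (⇑(x⁻¹ : Perm (Fin n))) := by
    have key : ∀ (d v : ℕ) (h : v + d < n) (hv : v < n), 0 < d →
        x⁻¹ ⟨v, hv⟩ < x⁻¹ ⟨v + d, h⟩ := by
      intro d
      induction d with
      | zero => intro v h hv h0; omega
      | succ d ih =>
        intro v h hv h0
        rcases Nat.eq_zero_or_pos d with rfl | hd
        · exact step v h hv
        · have h1 : v + d < n := by omega
          have ha := ih v h1 hv hd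
          have hb := step (v + d) h h1
          exact ha.trans hb
    intro i j hij
    have hk := key ((j : ℕ) - (i : ℕ)) (i : ℕ) (by omega) (i.isLt) (by
      have : (i : ℕ) < (j : ℕ) := hij
      omega)
    have e1 : (⟨(i : ℕ), i.isLt⟩ : Fin n) = i := Fin.ext rfl
    have e2 : (⟨(i : ℕ) + ((j : ℕ) - (i : ℕ)), by omega⟩ : Fin n) = j := by
      apply Fin.ext
      have : (i : ℕ) < (j : ℕ) := hij
      simp
      omega
    rw [e1, e2] at hk
    exact hk
  intro i j hij
  rcases lt_trichotomy (x i) (x j) with hc | hc | hc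
  · exact hc
  · exact absurd (x.injective hc) (ne_of_lt hij)
  · have := hmono hc
    simp only [Perm.inv_def, Equiv.apply_symm_apply, Equiv.symm_apply_apply] at this
    exact absurd (hij.trans this) (lt_irrefl _)

lemma exists_word_aux : ∀ (m : ℕ) (x : Perm (Fin n)), inv x = m →
    ∃ l : List (Perm (Fin n)), l.length = m ∧ (∀ s ∈ l, IsAdjTrans s) ∧ l.prod = x := by
  intro m
  induction m with
  | zero =>
    intro x hm
    refine ⟨[], rfl, by simp, ?_⟩
    simp only [List.prod_nil]
    symm
    apply strictMono_perm_eq_one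
    intro i j hij
    rcases lt_trichotomy (x i) (x j) with hc | hc | hc
    · exact hc
    · exact absurd (x.injective hc) (ne_of_lt hij)
    · exfalso
      have hmem : (i, j) ∈ invSet x := mem_invSet.mpr ⟨hij, hc⟩
      have := Finset.card_ne_zero_of_mem hmem
      exact this hm
  | succ m ih =>
    intro x hm
    have hx1 : x ≠ 1 := by
      intro h
      rw [h, inv_one] at hm
      omega
    obtain ⟨v, h, hdn⟩ := exists_descent x hx1
    have hdown := inv_adj_mul_down h x hdn
    have hinv : inv (Equiv.swap (⟨v, Nat.lt_of_succ_lt h⟩ : Fin n) ⟨v + 1, h⟩ * x) = m := by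
      omega
    obtain ⟨l, hlen, hadj, hprod⟩ := ih _ hinv
    refine ⟨Equiv.swap (⟨v, Nat.lt_of_succ_lt h⟩ : Fin n) ⟨v + 1, h⟩ :: l, by simp [hlen], ?_, ?_⟩
    · intro t ht
      rcases List.mem_cons.mp ht with rfl | ht
      · exact ⟨v, h, rfl⟩
      · exact hadj t ht
    · rw [List.prod_cons, hprod, swap_mul_swap_adj h x]

lemma permLength_eq_inv (x : Perm (Fin n)) : permLength x = inv x := by
  obtain ⟨l, hlen, hadj, hprod⟩ := exists_word_aux (inv x) x rfl
  have hmem : inv x ∈ {k | ∃ l : List (Perm (Fin n)),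
      l.length = k ∧ (∀ s ∈ l, IsAdjTrans s) ∧ l.prod = x} := ⟨l, hlen, hadj, hprod⟩
  apply le_antisymm
  · exact Nat.sInf_le hmem
  · apply le_csInf ⟨inv x, hmem⟩
    rintro k ⟨l', hlen', hadj', hprod'⟩
    rw [← hlen', ← hprod']
    exact inv_list_prod_le l' hadj'

section Clean

variable {k l : Fin n}

/-- The pair-rearranging involution used to compare inversion sets. -/
def sigma (k l : Fin n) (z : Fin n × Fin n) : Fin n × Fin n :=
  if (k < z.1 ∧ z.1 < l) ∨ (k < z.2 ∧ z.2 < l) then z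
  else (Equiv.swap k l z.1, Equiv.swap k l z.2)

lemma swap_Ioo (hkl : k < l) (x : Fin n) :
    (k < Equiv.swap k l x ∧ Equiv.swap k l x < l) ↔ (k < x ∧ x < l) := by
  by_cases h1 : x = k
  · rw [h1, Equiv.swap_apply_left]
    simp [lt_irrefl, hkl]
  · by_cases h2 : x = l
    · rw [h2, Equiv.swap_apply_right]
      simp [lt_irrefl, hkl]
    · rw [Equiv.swap_apply_of_ne_of_ne h1 h2]

lemma sigma_invol (hkl : k < l) (z : Fin n × Fin n) : sigma k l (sigma k l z) = z := by
  by_cases hC : (k < z.1 ∧ z.1 < l) ∨ (k < z.2 ∧ z.2 < l)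
  · have h1 : sigma k l z = z := by rw [sigma, if_pos hC]
    simp only [h1]
  · have h1 : sigma k l z = (Equiv.swap k l z.1, Equiv.swap k l z.2) := by
      rw [sigma, if_neg hC]
    rw [h1, sigma]
    rw [if_neg]
    · simp [Equiv.swap_apply_self]
    · dsimp only
      rw [swap_Ioo hkl, swap_Ioo hkl]
      exact hC

lemma sigma_mem (r : Perm (Fin n)) (hkl : k < l)
    (H : ∀ j, k < j → j < l → (r j < r k ∧ r j < r l) ∨ (r k < r j ∧ r l < r j))
    (z : Fin n × Fin n) (hz : z ∈ invSet (r * Equiv.swap k l)) (hne : z ≠ (k, l)) :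
    sigma k l z ∈ invSet r ∧ sigma k l z ≠ (k, l) := by
  obtain ⟨i, j⟩ := z
  rw [mem_invSet] at hz
  obtain ⟨hij, hlt⟩ := hz
  simp only [Perm.mul_apply] at hlt hij
  have hij' : i < j := hij
  have hlt' : r (Equiv.swap k l j) < r (Equiv.swap k l i) := hlt
  by_cases hC : (k < i ∧ i < l) ∨ (k < j ∧ j < l)
  · -- identity branch
    have hid : sigma k l (i, j) = (i, j) := by rw [sigma, if_pos]; exact hC
    rw [hid]
    refine ⟨mem_invSet.mpr ⟨hij', ?_⟩, ?_⟩
    · show r j < r i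
      by_cases hik : i = k
      · obtain ⟨hm1, hm2⟩ : k < j ∧ j < l := by
          rcases hC with ⟨ha, hb⟩ | hb
          · rw [hik] at ha; exact absurd ha (lt_irrefl _)
          · exact hb
        have hjk : j ≠ k := ne_of_gt hm1
        have hjl : j ≠ l := ne_of_lt hm2
        rw [hik, Equiv.swap_apply_left, Equiv.swap_apply_of_ne_of_ne hjk hjl] at hlt'
        rw [hik]
        rcases H j hm1 hm2 with ⟨ha, hb⟩ | ⟨ha, hb⟩
        · exact ha
        · exact absurd hlt' (asymm hb)
      · by_cases hil : i = l
        · exfalso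
          rcases hC with ⟨ha, hb⟩ | ⟨ha, hb⟩
          · rw [hil] at hb; exact absurd hb (lt_irrefl _)
          · rw [hil] at hij'
            exact absurd (hij'.trans hb) (lt_irrefl _)
        · rw [Equiv.swap_apply_of_ne_of_ne hik hil] at hlt'
          by_cases hjk : j = k
          · exfalso
            rcases hC with ⟨ha, hb⟩ | ⟨ha, hb⟩
            · rw [hjk] at hij'
              exact absurd (ha.trans hij') (lt_irrefl _)
            · rw [hjk] at ha; exact absurd ha (lt_irrefl _)
          · by_cases hjl : j = l
            · rw [hjl, Equiv.swap_apply_right] at hlt'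
              obtain ⟨hm1, hm2⟩ : k < i ∧ i < l := by
                rcases hC with hb | ⟨ha, hb⟩
                · exact hb
                · rw [hjl] at hb; exact absurd hb (lt_irrefl _)
              rcases H i hm1 hm2 with ⟨ha, hb⟩ | ⟨ha, hb⟩
              · exact absurd hlt' (asymm ha)
              · rw [hjl]; exact hb
            · rwa [Equiv.swap_apply_of_ne_of_ne hjk hjl] at hlt'
    · intro hc
      rw [Prod.ext_iff] at hc
      obtain ⟨hc1, hc2⟩ := hc
      have hc1' : i = k := hc1
      have hc2' : j = l := hc2
      rcases hC with ⟨ha, hb⟩ | ⟨ha, hb⟩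
      · rw [hc1'] at ha; exact absurd ha (lt_irrefl _)
      · rw [hc2'] at hb; exact absurd hb (lt_irrefl _)
  · -- swap branch
    have hsw : sigma k l (i, j) = (Equiv.swap k l i, Equiv.swap k l j) := by
      rw [sigma, if_neg hC]
    rw [hsw]
    push_neg at hC
    obtain ⟨hCi, hCj⟩ := hC
    refine ⟨mem_invSet.mpr ⟨?_, hlt'⟩, ?_⟩
    · show Equiv.swap k l i < Equiv.swap k l j
      by_cases hik : i = k
      · have hjk : j ≠ k := by rw [← hik]; exact ne_of_gt hij'
        have hjl : j ≠ l := by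
          intro hc
          exact hne (by rw [hik, hc])
        have hlj : l < j := by
          have := hCj (by rw [← hik]; exact hij')
          exact lt_of_le_of_ne this (Ne.symm hjl)
        rw [hik, Equiv.swap_apply_left, Equiv.swap_apply_of_ne_of_ne hjk hjl]
        exact hlj
      · by_cases hil : i = l
        · have hlj : l < j := by rw [← hil]; exact hij'
          have hjk : j ≠ k := ne_of_gt (hkl.trans hlj)
          have hjl : j ≠ l := ne_of_gt hlj
          rw [hil, Equiv.swap_apply_right, Equiv.swap_apply_of_ne_of_ne hjk hjl]
          exact hkl.trans hlj
        · rw [Equiv.swap_apply_of_ne_of_ne hik hil]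
          by_cases hjk : j = k
          · have hik2 : i < k := by rw [← hjk]; exact hij'
            rw [hjk, Equiv.swap_apply_left]
            exact hik2.trans hkl
          · by_cases hjl : j = l
            · have hnki : ¬ k < i := by
                intro hc
                have := hCi hc
                rw [hjl] at hij'
                exact absurd hij' (not_lt.mpr this)
              rw [hjl, Equiv.swap_apply_right]
              exact lt_of_le_of_ne (not_lt.mp hnki) hik
            · rw [Equiv.swap_apply_of_ne_of_ne hjk hjl]
              exact hij'
    · intro hc
      rw [Prod.ext_iff] at hc
      obtain ⟨hc1, hc2⟩ := hc
      have hc1' : Equiv.swap k l i = k := hc1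
      have hc2' : Equiv.swap k l j = l := hc2
      have hi : i = l := by
        have := congrArg (Equiv.swap k l) hc1'
        rwa [Equiv.swap_apply_self, Equiv.swap_apply_left] at this
      have hj : j = k := by
        have := congrArg (Equiv.swap k l) hc2'
        rwa [Equiv.swap_apply_self, Equiv.swap_apply_right] at this
      rw [hi, hj] at hij'
      exact absurd hij' (asymm hkl)

lemma inv_mul_swap_clean (p : Perm (Fin n)) (k l : Fin n) (hkl : k < l)
    (hv : p k < p l) (hmid : ∀ j, k < j → j < l → p j < p k ∨ p l < p j) :
    inv (p * Equiv.swap k l) = inv p + 1 := by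
  set q := p * Equiv.swap k l with hq
  have hqk : q k = p l := by rw [hq, Perm.mul_apply, Equiv.swap_apply_left]
  have hql : q l = p k := by rw [hq, Perm.mul_apply, Equiv.swap_apply_right]
  have hqj : ∀ j, j ≠ k → j ≠ l → q j = p j := by
    intro j h1 h2
    rw [hq, Perm.mul_apply, Equiv.swap_apply_of_ne_of_ne h1 h2]
  have hpq : p = q * Equiv.swap k l := by
    rw [hq, mul_assoc, Equiv.swap_mul_self, mul_one]
  have Hp : ∀ j, k < j → j < l → (p j < p k ∧ p j < p l) ∨ (p k < p j ∧ p l < p j) := by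
    intro j h1 h2
    rcases hmid j h1 h2 with hc | hc
    · exact Or.inl ⟨hc, hc.trans hv⟩
    · exact Or.inr ⟨hv.trans hc, hc⟩
  have Hq : ∀ j, k < j → j < l → (q j < q k ∧ q j < q l) ∨ (q k < q j ∧ q l < q j) := by
    intro j h1 h2
    have hjk : j ≠ k := ne_of_gt h1
    have hjl : j ≠ l := ne_of_lt h2
    rw [hqk, hql, hqj j hjk hjl]
    rcases Hp j h1 h2 with ⟨ha, hb⟩ | ⟨ha, hb⟩
    · exact Or.inl ⟨hb, ha⟩
    · exact Or.inr ⟨hb, ha⟩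
  have hklq : (k, l) ∈ invSet q := by
    rw [mem_invSet]
    exact ⟨hkl, by rw [hqk, hql]; exact hv⟩
  have hcard : ((invSet q).erase (k, l)).card = (invSet p).card := by
    apply Finset.card_bij' (fun z _ => sigma k l z) (fun z _ => sigma k l z)
    · intro z hz
      rw [Finset.mem_erase] at hz
      exact (sigma_mem p hkl Hp z (hq ▸ hz.2) hz.1).1
    · intro z hz
      rw [Finset.mem_erase]
      have hz' : z ∈ invSet (q * Equiv.swap k l) := by rw [← hpq]; exact hz
      have hzne : z ≠ (k, l) := by
        intro hc
        subst hc
        rw [mem_invSet] at hz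
        exact absurd hz.2 (asymm hv)
      have := sigma_mem q hkl Hq z hz' hzne
      exact ⟨this.2, this.1⟩
    · intro z _; exact sigma_invol hkl z
    · intro z _; exact sigma_invol hkl z
  have hfin := Finset.card_erase_add_one hklq
  show (invSet q).card = (invSet p).card + 1
  omega

end Clean

-- (fillings development continues)

section Fill

variable {α β γ : Partn} {n : ℕ} {e : Fin n → ℕ × ℕ}

lemma mem_cells_iff {c : ℕ × ℕ} : c ∈ SkewCells β γ ↔ γ.f c.1 ≤ c.2 ∧ c.2 < β.f c.1 :=
  Iff.rfl

lemma cells_row_eq (hrook : RookStrip β γ) {c c' : ℕ × ℕ} (hc : c ∈ SkewCells β γ)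
    (hc' : c' ∈ SkewCells β γ) (h : c.1 = c'.1) : c = c' := by
  obtain ⟨i, j⟩ := c
  obtain ⟨i', j'⟩ := c'
  obtain rfl : i = i' := h
  obtain ⟨h1, h2⟩ := hc
  obtain ⟨h1', h2'⟩ := hc'
  have hv := hrook.1 i
  simp only at h1 h2 h1' h2' hv
  have : j = j' := by omega
  rw [this]

lemma cells_col_eq (hrook : RookStrip β γ) (hsub : PartnSub γ β) {c c' : ℕ × ℕ}
    (hc : c ∈ SkewCells β γ) (hc' : c' ∈ SkewCells β γ) (h : c.2 = c'.2) : c = c' := by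
  obtain ⟨i, j⟩ := c
  obtain ⟨i', j'⟩ := c'
  obtain rfl : j = j' := h
  obtain ⟨h1, h2⟩ := hc
  obtain ⟨h1', h2'⟩ := hc'
  simp only at h1 h2 h1' h2'
  suffices hii : i = i' by rw [hii]
  by_contra hne
  obtain ⟨N, hN⟩ := β.finite_supp
  have hfinB : {r | j < β.f r}.Finite := by
    apply Set.Finite.subset (Set.finite_Iio N)
    intro r hr
    simp only [Set.mem_setOf_eq] at hr
    simp only [Set.mem_Iio]
    by_contra hcon
    push_neg at hcon
    rw [hN r hcon] at hr
    omega
  have hfinG : {r | j < γ.f r}.Finite := by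
    apply hfinB.subset
    intro r hr
    exact lt_of_lt_of_le hr (hsub r)
  have hiG : i ∉ {r | j < γ.f r} := by simp only [Set.mem_setOf_eq]; omega
  have hiG' : i' ∉ {r | j < γ.f r} := by simp only [Set.mem_setOf_eq]; omega
  have hdisj : Disjoint {r | j < γ.f r} ({i, i'} : Set ℕ) := by
    rw [Set.disjoint_right]
    intro r hr
    rcases hr with rfl | rfl
    · exact hiG
    · exact hiG'
  have hsubset : {r | j < γ.f r} ∪ {i, i'} ⊆ {r | j < β.f r} := by
    intro r hr
    rcases hr with hr | hr
    · exact lt_of_lt_of_le hr (hsub r)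
    · rcases hr with rfl | rfl
      · exact h2
      · exact h2'
  have hcard : ({r | j < γ.f r} ∪ {i, i'}).ncard ≤ {r | j < β.f r}.ncard :=
    Set.ncard_le_ncard hsubset hfinB
  rw [Set.ncard_union_eq hdisj hfinG ((Set.finite_singleton i').insert i),
    Set.ncard_pair hne] at hcard
  have := hrook.2 j
  unfold ptranspose at this
  omega

lemma e_mem (he : IsRowRead β γ e) (k : Fin n) : e k ∈ SkewCells β γ := he.1 k

lemma e_lt_iff (he : IsRowRead β γ e) (k l : Fin n) : k < l ↔ (e k).1 < (e l).1 := by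
  constructor
  · exact he.2.2.2 k l
  · intro h
    rcases lt_trichotomy k l with hc | hc | hc
    · exact hc
    · rw [hc] at h; exact absurd h (lt_irrefl _)
    · exact absurd (h.trans (he.2.2.2 l k hc)) (lt_irrefl _)

lemma e_col_lt (hrook : RookStrip β γ) (hsub : PartnSub γ β) (he : IsRowRead β γ e)
    {k l : Fin n} (hkl : k < l) : (e l).2 < (e k).2 := by
  have hrow := he.2.2.2 k l hkl
  have hk := he.1 k
  have hl := he.1 l
  obtain ⟨h1, h2⟩ := hk
  obtain ⟨h1', h2'⟩ := hl
  have hv := hrook.1 (e l).1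
  have hanti := γ.antitone' (le_of_lt hrow)
  have hle : (e l).2 ≤ (e k).2 := by omega
  rcases lt_or_eq_of_le hle with hc | hc
  · exact hc
  · exfalso
    have := cells_col_eq hrook hsub (he.1 l) (he.1 k) hc
    have : (e l).1 = (e k).1 := by rw [this]
    omega

lemma sortSwap_empty (hrook : RookStrip β γ) (hsub : PartnSub γ β) (W Z : (ℕ × ℕ) → ℕ) :
    ¬ SortSwap β γ W Z := by
  rintro ⟨p, q, hp, hq, (⟨h1, h2⟩ | ⟨h1, h2⟩), -, -⟩
  · have := cells_row_eq hrook hp hq h1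
    rw [this] at h2
    exact absurd h2 (lt_irrefl _)
  · have := cells_col_eq hrook hsub hp hq h1
    rw [this] at h2
    exact absurd h2 (lt_irrefl _)

lemma reflTrans_sortSwap (hrook : RookStrip β γ) (hsub : PartnSub γ β) {a b : (ℕ × ℕ) → ℕ}
    (h : Relation.ReflTransGen (SortSwap β γ) a b) : a = b := by
  induction h with
  | refl => rfl
  | tail _ hstep ih => exact absurd hstep (sortSwap_empty hrook hsub _ _)

lemma skf_ext {F G : SkFilling α β γ} (h : F.entry = G.entry) : F = G := by
  cases F
  cases G
  simp only at h
  subst h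
  rfl

/-- Swap the entries of two cells of a filling. -/
def mkSwapC (F : SkFilling α β γ) (p q : ℕ × ℕ) (hp : p ∈ SkewCells β γ)
    (hq : q ∈ SkewCells β γ) : SkFilling α β γ where
  entry := F.entry ∘ (Equiv.swap p q)
  zero_outside := by
    intro c hc
    have hcp : c ≠ p := fun h => hc (h ▸ hp)
    have hcq : c ≠ q := fun h => hc (h ▸ hq)
    simp only [Function.comp_apply, Equiv.swap_apply_of_ne_of_ne hcp hcq]
    exact F.zero_outside c hc
  pos_inside := by
    intro c hc
    simp only [Function.comp_apply]
    rcases eq_or_ne c p with rfl | hcp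
    · rw [Equiv.swap_apply_left]; exact F.pos_inside q hq
    · rcases eq_or_ne c q with rfl | hcq
      · rw [Equiv.swap_apply_right]; exact F.pos_inside p hp
      · rw [Equiv.swap_apply_of_ne_of_ne hcp hcq]; exact F.pos_inside c hc
  content := by
    intro u hu
    rw [← F.content u hu]
    have hmemswap : ∀ c, c ∈ SkewCells β γ → Equiv.swap p q c ∈ SkewCells β γ := by
      intro c hc
      rcases eq_or_ne c p with rfl | hcp
      · rw [Equiv.swap_apply_left]; exact hq
      · rcases eq_or_ne c q with rfl | hcq
        · rw [Equiv.swap_apply_right]; exact hp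
        · rw [Equiv.swap_apply_of_ne_of_ne hcp hcq]; exact hc
    have hset : {c | c ∈ SkewCells β γ ∧ (F.entry ∘ (Equiv.swap p q)) c = u}
        = (Equiv.swap p q) '' {c | c ∈ SkewCells β γ ∧ F.entry c = u} := by
      ext c
      simp only [Set.mem_image, Set.mem_setOf_eq, Function.comp_apply]
      constructor
      · rintro ⟨hc, hc2⟩
        exact ⟨Equiv.swap p q c, ⟨hmemswap c hc, hc2⟩, Equiv.swap_apply_self _ _ _⟩
      · rintro ⟨d, ⟨hd, hd2⟩, rfl⟩
        refine ⟨hmemswap d hd, ?_⟩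
        rw [Equiv.swap_apply_self]
        exact hd2
    have : {c | c ∈ SkewCells β γ ∧ (F.entry ∘ ⇑(Equiv.swap p q)) c = u}.ncard
        = {c | c ∈ SkewCells β γ ∧ F.entry c = u}.ncard := by
      rw [hset, Set.ncard_image_of_injective _ (Equiv.injective _)]
    exact this

lemma mkSwapC_entry (F : SkFilling α β γ) (p q : ℕ × ℕ) (hp hq) (c : ℕ × ℕ) :
    (mkSwapC F p q hp hq).entry c = F.entry (Equiv.swap p q c) := rfl

lemma mkSwapC_update {F : SkFilling α β γ} {p q : ℕ × ℕ} (hp : p ∈ SkewCells β γ)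
    (hq : q ∈ SkewCells β γ) (hpq : p ≠ q) :
    Function.update (Function.update F.entry p (F.entry q)) q (F.entry p)
      = (mkSwapC F p q hp hq).entry := by
  funext c
  rcases eq_or_ne c q with rfl | h1
  · rw [Function.update_self, mkSwapC_entry, Equiv.swap_apply_right]
  · rw [Function.update_of_ne h1]
    rcases eq_or_ne c p with rfl | h2
    · rw [Function.update_self, mkSwapC_entry, Equiv.swap_apply_left]
    · rw [Function.update_of_ne h2, mkSwapC_entry,
        Equiv.swap_apply_of_ne_of_ne h2 h1]

lemma w_mkSwapC (he : IsRowRead β γ e) (F : SkFilling α β γ) (k l j : Fin n) :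
    (mkSwapC F (e k) (e l) (he.1 k) (he.1 l)).entry (e j)
      = if j = k then F.entry (e l) else if j = l then F.entry (e k) else F.entry (e j) := by
  rw [mkSwapC_entry]
  rcases eq_or_ne j k with rfl | h1
  · rw [Equiv.swap_apply_left, if_pos rfl]
  · rw [if_neg h1]
    rcases eq_or_ne j l with rfl | h2
    · rw [Equiv.swap_apply_right, if_pos rfl]
    · rw [if_neg h2, Equiv.swap_apply_of_ne_of_ne
        (fun hc => h1 (he.2.1 hc)) (fun hc => h2 (he.2.1 hc))]

lemma boxMove_mkSwap (he : IsRowRead β γ e) (F : SkFilling α β γ) {k l : Fin n}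
    (hkl : k < l) (hw : F.entry (e k) < F.entry (e l)) :
    BoxMove F (mkSwapC F (e k) (e l) (he.1 k) (he.1 l)) := by
  refine ⟨e k, e l, he.1 k, he.1 l, (e_lt_iff he k l).mp hkl, hw, ?_⟩
  rw [mkSwapC_update (he.1 k) (he.1 l)
    (fun hc => absurd (he.2.1 hc) (ne_of_lt hkl))]

lemma boxMove_elim (hrook : RookStrip β γ) (hsub : PartnSub γ β) (he : IsRowRead β γ e)
    {F G : SkFilling α β γ} (h : BoxMove F G) :
    ∃ k l : Fin n, k < l ∧ F.entry (e k) < F.entry (e l) ∧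
      G = mkSwapC F (e k) (e l) (he.1 k) (he.1 l) := by
  obtain ⟨p, q, hp, hq, hrow, hlt, hchain⟩ := h
  obtain ⟨k, rfl⟩ := he.2.2.1 p hp
  obtain ⟨l, rfl⟩ := he.2.2.1 q hq
  have hkl : k < l := (e_lt_iff he k l).mpr hrow
  have hGentry := (reflTrans_sortSwap hrook hsub hchain).symm
  refine ⟨k, l, hkl, hlt, skf_ext ?_⟩
  rw [hGentry, mkSwapC_update (he.1 k) (he.1 l)
    (fun hc => absurd (he.2.1 hc) (ne_of_lt hkl))]

/-- The weighted-sum monovariant. -/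
def Tstat (e : Fin n → ℕ × ℕ) (F : SkFilling α β γ) : ℕ :=
  ∑ k : Fin n, (k : ℕ) * F.entry (e k)

lemma T_mkSwap_lt (he : IsRowRead β γ e) (F : SkFilling α β γ) {k l : Fin n}
    (hkl : k < l) (hw : F.entry (e k) < F.entry (e l)) :
    Tstat e (mkSwapC F (e k) (e l) (he.1 k) (he.1 l)) < Tstat e F := by
  classical
  unfold Tstat
  have hkneql : k ≠ l := ne_of_lt hkl
  have hlmem : l ∈ Finset.univ.erase k := Finset.mem_erase.mpr ⟨Ne.symm hkneql, Finset.mem_univ l⟩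
  set G := mkSwapC F (e k) (e l) (he.1 k) (he.1 l) with hG
  have split : ∀ g : Fin n → ℕ, ∑ j : Fin n, g j
      = g k + (g l + ∑ j ∈ (Finset.univ.erase k).erase l, g j) := by
    intro g
    rw [Finset.add_sum_erase _ g hlmem, Finset.add_sum_erase _ g (Finset.mem_univ k)]
  rw [split (fun j => (j : ℕ) * G.entry (e j)), split (fun j => (j : ℕ) * F.entry (e j))]
  have hsame : ∑ j ∈ (Finset.univ.erase k).erase l, (j : ℕ) * G.entry (e j)
      = ∑ j ∈ (Finset.univ.erase k).erase l, (j : ℕ) * F.entry (e j) := by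
    apply Finset.sum_congr rfl
    intro j hj
    rw [Finset.mem_erase, Finset.mem_erase] at hj
    rw [hG, w_mkSwapC he, if_neg hj.2.1, if_neg hj.1]
  rw [hsame]
  have hk' : G.entry (e k) = F.entry (e l) := by rw [hG, w_mkSwapC he, if_pos rfl]
  have hl' : G.entry (e l) = F.entry (e k) := by
    rw [hG, w_mkSwapC he, if_neg (Ne.symm hkneql), if_pos rfl]
  rw [hk', hl']
  have hklN : (k : ℕ) < (l : ℕ) := hkl
  nlinarith [hklN, hw]

lemma leBox_T_le (hrook : RookStrip β γ) (hsub : PartnSub γ β) (he : IsRowRead β γ e)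
    {Z X : SkFilling α β γ} (h : LeBox Z X) : Tstat e Z ≤ Tstat e X := by
  induction h with
  | refl => exact le_refl _
  | @tail b c _ hstep ih =>
    obtain ⟨-, -, hmove⟩ := hstep
    obtain ⟨k, l, hkl, hw, hb⟩ := boxMove_elim hrook hsub he hmove
    have hlt := T_mkSwap_lt he c hkl hw
    rw [← hb] at hlt
    exact le_trans ih (le_of_lt hlt)


/-! ### Prefix counts and the lattice condition -/

/-- Number of occurrences of `u` among the first `t` letters of the reading word. -/
def cnt (w : Fin n → ℕ) (u t : ℕ) : ℕ :=
  (Finset.univ.filter fun k : Fin n => (k : ℕ) < t ∧ w k = u).card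

/-- The lattice condition in prefix form. -/
def Lat (w : Fin n → ℕ) : Prop := ∀ u t : ℕ, 2 ≤ u → cnt w u t ≤ cnt w (u - 1) t

lemma cnt_congr_fun {w w' : Fin n → ℕ} (h : ∀ k, w k = w' k) (u t : ℕ) :
    cnt w u t = cnt w' u t := by
  unfold cnt
  congr 1
  apply Finset.filter_congr
  intro k _
  rw [h k]

lemma cnt_mono (w : Fin n → ℕ) (u : ℕ) {t t' : ℕ} (h : t ≤ t') : cnt w u t ≤ cnt w u t' := by
  apply Finset.card_le_card
  intro k hk
  rw [Finset.mem_filter] at hk ⊢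
  exact ⟨hk.1, lt_of_lt_of_le hk.2.1 h, hk.2.2⟩

lemma cnt_zero (w : Fin n → ℕ) (u : ℕ) : cnt w u 0 = 0 := by
  unfold cnt
  rw [Finset.card_eq_zero, Finset.filter_eq_empty_iff]
  intro k _
  simp

lemma cnt_succ_mem (w : Fin n → ℕ) {u : ℕ} {j : Fin n} (hj : w j = u) {t : ℕ}
    (ht : t ≤ (j : ℕ)) : cnt w u t + 1 ≤ cnt w u ((j : ℕ) + 1) := by
  have hsub : insert j (Finset.univ.filter fun k : Fin n => (k : ℕ) < t ∧ w k = u)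
      ⊆ Finset.univ.filter fun k : Fin n => (k : ℕ) < (j : ℕ) + 1 ∧ w k = u := by
    intro m hm
    rcases Finset.mem_insert.mp hm with rfl | hm
    · exact Finset.mem_filter.mpr ⟨Finset.mem_univ _, by omega, hj⟩
    · rw [Finset.mem_filter] at hm ⊢
      exact ⟨hm.1, by omega, hm.2.2⟩
  have hnot : j ∉ (Finset.univ.filter fun k : Fin n => (k : ℕ) < t ∧ w k = u) := by
    rw [Finset.mem_filter]
    rintro ⟨-, h1, -⟩
    omega
  have := Finset.card_le_card hsub
  rw [Finset.card_insert_of_notMem hnot] at this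
  exact this

lemma cnt_stable (w : Fin n → ℕ) {u t t' : ℕ} (htt : t ≤ t')
    (h : ∀ k : Fin n, t ≤ (k : ℕ) → (k : ℕ) < t' → w k ≠ u) : cnt w u t' = cnt w u t := by
  unfold cnt
  congr 1
  apply Finset.filter_congr
  intro k _
  constructor
  · rintro ⟨h1, h2⟩
    refine ⟨?_, h2⟩
    by_contra hcon
    push_neg at hcon
    exact h k hcon h1 h2
  · rintro ⟨h1, h2⟩
    exact ⟨lt_of_lt_of_le h1 htt, h2⟩

lemma cnt_pos (w : Fin n → ℕ) {u : ℕ} {j : Fin n} (hj : w j = u) {t : ℕ}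
    (hjt : (j : ℕ) < t) : 1 ≤ cnt w u t := by
  rw [Nat.succ_le_iff, cnt, Finset.card_pos]
  exact ⟨j, Finset.mem_filter.mpr ⟨Finset.mem_univ _, hjt, hj⟩⟩

/-- Counting is unchanged by a swap whose two positions are on the same side of `t`. -/
lemma cnt_swap_out (he : IsRowRead β γ e) (F : SkFilling α β γ) {k l : Fin n} (hkl : k ≠ l)
    {t : ℕ} (hiff : ((k : ℕ) < t ↔ (l : ℕ) < t)) (u : ℕ) :
    cnt (fun j => (mkSwapC F (e k) (e l) (he.1 k) (he.1 l)).entry (e j)) u t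
      = cnt (fun j => F.entry (e j)) u t := by
  unfold cnt
  apply Finset.card_bij' (fun j _ => Equiv.swap k l j) (fun j _ => Equiv.swap k l j)
  · intro j hj
    simp only [Finset.mem_filter, Finset.mem_univ, true_and] at hj ⊢
    obtain ⟨h1, h2⟩ := hj
    rw [w_mkSwapC he] at h2
    constructor
    · rcases eq_or_ne j k with rfl | hjk
      · rw [Equiv.swap_apply_left]; exact hiff.mp h1
      · rcases eq_or_ne j l with rfl | hjl
        · rw [Equiv.swap_apply_right]; exact hiff.mpr h1
        · rw [Equiv.swap_apply_of_ne_of_ne hjk hjl]; exact h1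
    · rcases eq_or_ne j k with rfl | hjk
      · rw [Equiv.swap_apply_left]
        rw [if_pos rfl] at h2
        exact h2
      · rcases eq_or_ne j l with rfl | hjl
        · rw [Equiv.swap_apply_right]
          rw [if_neg hjk, if_pos rfl] at h2
          exact h2
        · rw [Equiv.swap_apply_of_ne_of_ne hjk hjl]
          rw [if_neg hjk, if_neg hjl] at h2
          exact h2
  · intro j hj
    simp only [Finset.mem_filter, Finset.mem_univ, true_and] at hj ⊢
    obtain ⟨h1, h2⟩ := hj
    constructor
    · rcases eq_or_ne j k with rfl | hjk
      · rw [Equiv.swap_apply_left]; exact hiff.mp h1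
      · rcases eq_or_ne j l with rfl | hjl
        · rw [Equiv.swap_apply_right]; exact hiff.mpr h1
        · rw [Equiv.swap_apply_of_ne_of_ne hjk hjl]; exact h1
    · rw [w_mkSwapC he]
      rcases eq_or_ne j k with rfl | hjk
      · rw [Equiv.swap_apply_left, if_neg (Ne.symm hkl), if_pos rfl]
        exact h2
      · rcases eq_or_ne j l with rfl | hjl
        · rw [Equiv.swap_apply_right, if_pos rfl]
          exact h2
        · rw [Equiv.swap_apply_of_ne_of_ne hjk hjl, if_neg hjk, if_neg hjl]
          exact h2
  · intro j _; exact Equiv.swap_apply_self k l j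
  · intro j _; exact Equiv.swap_apply_self k l j

/-- Counting across a swap that straddles `t`. -/
lemma cnt_swap_in (he : IsRowRead β γ e) (F : SkFilling α β γ) {k l : Fin n} (hkl : k ≠ l)
    {t : ℕ} (hk : (k : ℕ) < t) (hl : ¬ (l : ℕ) < t) (u : ℕ) :
    cnt (fun j => (mkSwapC F (e k) (e l) (he.1 k) (he.1 l)).entry (e j)) u t
        + (if F.entry (e k) = u then 1 else 0)
      = cnt (fun j => F.entry (e j)) u t + (if F.entry (e l) = u then 1 else 0) := by
  classical
  unfold cnt
  rw [Finset.card_filter, Finset.card_filter]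
  rw [← Finset.add_sum_erase _ _ (Finset.mem_univ k), ← Finset.add_sum_erase _ _ (Finset.mem_univ k)]
  have hsame : ∑ j ∈ Finset.univ.erase k,
        (if (j : ℕ) < t ∧ (fun j => (mkSwapC F (e k) (e l) (he.1 k) (he.1 l)).entry (e j)) j = u then 1 else 0)
      = ∑ j ∈ Finset.univ.erase k,
        (if (j : ℕ) < t ∧ (fun j => F.entry (e j)) j = u then 1 else 0) := by
    apply Finset.sum_congr rfl
    intro j hj
    have hjk : j ≠ k := (Finset.mem_erase.mp hj).1
    simp only
    rcases eq_or_ne j l with rfl | hjl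
    · rw [if_neg (fun hc => hl hc.1), if_neg (fun hc => hl hc.1)]
    · have hXY : (mkSwapC F (e k) (e l) (he.1 k) (he.1 l)).entry (e j) = F.entry (e j) := by
        rw [w_mkSwapC he, if_neg hjk, if_neg hjl]
      simp only [hXY]
  rw [hsame]
  have h1 : (if (k : ℕ) < t ∧ (fun j => (mkSwapC F (e k) (e l) (he.1 k) (he.1 l)).entry (e j)) k = u
      then 1 else 0) = (if F.entry (e l) = u then 1 else 0) := by
    have hX : (mkSwapC F (e k) (e l) (he.1 k) (he.1 l)).entry (e k) = F.entry (e l) := by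
      rw [w_mkSwapC he, if_pos rfl]
    simp only [hX, hk, true_and]
  have h2 : (if (k : ℕ) < t ∧ (fun j => F.entry (e j)) k = u then 1 else 0)
      = (if F.entry (e k) = u then 1 else 0) := by
    simp only [hk, true_and]
  rw [h1, h2]
  omega

/-- Transfer of the LR lattice condition to the prefix form, for rook strips. -/
lemma isLRF_iff_lat (hrook : RookStrip β γ) (hsub : PartnSub γ β) (he : IsRowRead β γ e)
    (F : SkFilling α β γ) : IsLRF F ↔ Lat (fun k => F.entry (e k)) := by
  classical
  have hncard : ∀ (P : ℕ × ℕ → Prop) [DecidablePred P],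
      {c | c ∈ SkewCells β γ ∧ P c}.ncard = (Finset.univ.filter fun k : Fin n => P (e k)).card := by
    intro P hP
    have himg : {c | c ∈ SkewCells β γ ∧ P c} = e '' {k : Fin n | P (e k)} := by
      ext c
      simp only [Set.mem_setOf_eq, Set.mem_image]
      constructor
      · rintro ⟨hc, hPc⟩
        obtain ⟨k, rfl⟩ := he.2.2.1 c hc
        exact ⟨k, hPc, rfl⟩
      · rintro ⟨k, hk, rfl⟩
        exact ⟨he.1 k, hk⟩
    rw [himg, Set.ncard_image_of_injective _ he.2.1]
    have : {k : Fin n | P (e k)} = ↑(Finset.univ.filter fun k : Fin n => P (e k)) := by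
      ext k; simp
    rw [this, Set.ncard_coe_finset]
  constructor
  · rintro ⟨-, -, hlat⟩ u t hu
    have main : ∀ t', 0 < t' → t' ≤ n →
        cnt (fun k => F.entry (e k)) u t' ≤ cnt (fun k => F.entry (e k)) (u - 1) t' := by
      intro t ht htn
      have ht1 : t - 1 < n := by omega
      set k0 : Fin n := ⟨t - 1, ht1⟩ with hk0
      set c := (e k0).2 with hc
      have hcol : ∀ k : Fin n, (c ≤ (e k).2 ↔ (k : ℕ) < t) := by
        intro k
        constructor
        · intro hck
          by_contra hcon
          push_neg at hcon
          have hk0k : k0 < k := by rw [Fin.lt_def]; simp only [hk0]; omega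
          have := e_col_lt hrook hsub he hk0k
          omega
        · intro hkt
          rcases eq_or_ne k k0 with rfl | hne
          · exact le_refl _
          · have hkk0 : k < k0 := by
              rw [Fin.lt_def]
              simp only [hk0]
              have : (k : ℕ) ≠ t - 1 := fun hc2 => hne (Fin.ext (by simp [hk0, hc2]))
              omega
            have := e_col_lt hrook hsub he hkk0
            omega
      have key : ∀ v : ℕ, cnt (fun k => F.entry (e k)) v t
          = {p | p ∈ SkewCells β γ ∧ (c ≤ p.2 ∧ F.entry p = v)}.ncard := by
        intro v
        rw [hncard (fun p => c ≤ p.2 ∧ F.entry p = v)]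
        unfold cnt
        congr 1
        apply Finset.filter_congr
        intro k _
        rw [hcol k]
      rw [key, key]
      have := hlat u c hu
      convert this using 2 <;> · ext p; tauto
    rcases Nat.eq_zero_or_pos t with rfl | ht
    · rw [cnt_zero, cnt_zero]
    by_cases htn : t ≤ n
    · exact main t ht htn
    · push_neg at htn
      rcases Nat.eq_zero_or_pos n with hn0 | hn0
      · have hzero : ∀ (v : ℕ) (w : Fin n → ℕ), cnt w v t = 0 := by
          intro v w
          rw [cnt, Finset.card_eq_zero, Finset.filter_eq_empty_iff]
          intro k _
          exact absurd k.isLt (by omega)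
        rw [hzero, hzero]
      · have hstab : ∀ v, cnt (fun k => F.entry (e k)) v t = cnt (fun k => F.entry (e k)) v n := by
          intro v
          apply cnt_stable _ (le_of_lt htn)
          intro k hk1 _ _
          exact absurd k.isLt (not_lt.mpr hk1)
        rw [hstab, hstab]
        exact main n hn0 le_rfl
  · intro hlat
    refine ⟨?_, ?_, ?_⟩
    · intro i j j' hc hc' hjj
      have hcc := cells_row_eq hrook hc hc' rfl
      have : j = j' := congrArg Prod.snd hcc
      rw [this]
    · intro i i' j hc hc' hii
      have hcc := cells_col_eq hrook hsub hc hc' rfl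
      have : i = i' := congrArg Prod.fst hcc
      omega
    · intro u c hu
      rw [show {p | p ∈ SkewCells β γ ∧ (c ≤ p.2 ∧ F.entry p = u)}.ncard
          = (Finset.univ.filter fun k : Fin n => c ≤ (e k).2 ∧ F.entry (e k) = u).card
        from hncard _, show {p | p ∈ SkewCells β γ ∧ (c ≤ p.2 ∧ F.entry p = u - 1)}.ncard
          = (Finset.univ.filter fun k : Fin n => c ≤ (e k).2 ∧ F.entry (e k) = u - 1).card
        from hncard _]
      by_cases hS : (Finset.univ.filter fun k : Fin n => c ≤ (e k).2).Nonempty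
      · set k0 := (Finset.univ.filter fun k : Fin n => c ≤ (e k).2).max' hS with hk0
        have hmax : ∀ k : Fin n, c ≤ (e k).2 → k ≤ k0 := by
          intro k hk
          apply Finset.le_max'
          exact Finset.mem_filter.mpr ⟨Finset.mem_univ _, hk⟩
        have hk0mem : c ≤ (e k0).2 := by
          have := (Finset.univ.filter fun k : Fin n => c ≤ (e k).2).max'_mem hS
          rw [← hk0] at this
          exact (Finset.mem_filter.mp this).2
        have hcol : ∀ k : Fin n, (c ≤ (e k).2 ↔ (k : ℕ) < (k0 : ℕ) + 1) := by
          intro k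
          constructor
          · intro hk
            have := hmax k hk
            omega
          · intro hk
            have hkk0 : k ≤ k0 := by
              rw [Fin.le_def]; omega
            rcases eq_or_lt_of_le hkk0 with rfl | hlt
            · exact hk0mem
            · have := e_col_lt hrook hsub he hlt
              omega
        have heq : ∀ v, (Finset.univ.filter fun k : Fin n => c ≤ (e k).2 ∧ F.entry (e k) = v).card
            = cnt (fun k => F.entry (e k)) v ((k0 : ℕ) + 1) := by
          intro v
          unfold cnt
          congr 1
          apply Finset.filter_congr
          intro k _
          rw [hcol k]
        rw [heq, heq]
        exact hlat u _ hu
      · rw [Finset.not_nonempty_iff_eq_empty] at hS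
        have hzero : ∀ v, (Finset.univ.filter fun k : Fin n => c ≤ (e k).2 ∧ F.entry (e k) = v).card = 0 := by
          intro v
          rw [Finset.card_eq_zero, Finset.filter_eq_empty_iff]
          intro k _
          intro hcon
          have : k ∈ Finset.univ.filter fun k : Fin n => c ≤ (e k).2 :=
            Finset.mem_filter.mpr ⟨Finset.mem_univ _, hcon.1⟩
          rw [hS] at this
          exact absurd this (Finset.notMem_empty k)
        rw [hzero, hzero]

/-! ### Partial sums and block indices -/

lemma psum_mono (α : Partn) : Monotone (psum α) := fun a b h =>
  Finset.sum_le_sum_of_subset (Finset.range_subset_range.mpr h)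

lemma psum_succ (α : Partn) {u : ℕ} (hu : 1 ≤ u) :
    psum α u = psum α (u - 1) + α.f (u - 1) := by
  have : u = (u - 1) + 1 := by omega
  rw [this]
  unfold psum
  rw [Finset.sum_range_succ]
  simp

lemma psum_stab (hn : PartnOf α n) : ∃ N, (∀ u, N ≤ u → psum α u = n) := by
  obtain ⟨N, hN, hsum⟩ := hn
  refine ⟨N, fun u hu => ?_⟩
  unfold psum
  rw [← hsum]
  symm
  apply Finset.sum_subset (Finset.range_subset_range.mpr hu)
  intro x hx hnx
  rw [Finset.mem_range] at hx
  rw [Finset.mem_range, not_lt] at hnx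
  exact hN x hnx

lemma psum_le_n (hn : PartnOf α n) (u : ℕ) : psum α u ≤ n := by
  obtain ⟨N, hN⟩ := psum_stab hn
  rcases le_total u N with h | h
  · exact le_trans (psum_mono α h) (le_of_eq (hN N le_rfl))
  · exact le_of_eq (hN u h)

lemma blockIdx_spec (hn : PartnOf α n) {v : ℕ} (hv : v < n) :
    1 ≤ blockIdx α v ∧ psum α (blockIdx α v - 1) ≤ v ∧ v < psum α (blockIdx α v) := by
  obtain ⟨N, hN⟩ := psum_stab hn
  have hSne : ∃ u, v < psum α u := ⟨N, by rw [hN N le_rfl]; exact hv⟩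
  have hmem : v < psum α (blockIdx α v) := Nat.sInf_mem hSne
  have h0 : blockIdx α v ≠ 0 := by
    intro hc
    rw [hc] at hmem
    unfold psum at hmem
    simp at hmem
  refine ⟨by omega, ?_, hmem⟩
  by_contra hcon
  push_neg at hcon
  have : blockIdx α v ≤ blockIdx α v - 1 := Nat.sInf_le hcon
  omega

lemma blockIdx_eq (hn : PartnOf α n) {v u : ℕ} (hu : 1 ≤ u)
    (h1 : psum α (u - 1) ≤ v) (h2 : v < psum α u) : blockIdx α v = u := by
  have hv : v < n := lt_of_lt_of_le h2 (psum_le_n hn u)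
  obtain ⟨hb1, hb2, hb3⟩ := blockIdx_spec hn hv
  set b := blockIdx α v
  rcases lt_trichotomy b u with hc | hc | hc
  · exfalso
    have : psum α b ≤ psum α (u - 1) := psum_mono α (by omega)
    omega
  · exact hc
  · exfalso
    have : psum α u ≤ psum α (b - 1) := psum_mono α (by omega)
    omega

/-! ### Standardization -/

lemma ncard_filter_e (he : IsRowRead β γ e) (P : ℕ × ℕ → Prop) [DecidablePred P] :
    {c | c ∈ SkewCells β γ ∧ P c}.ncard
      = (Finset.univ.filter fun k : Fin n => P (e k)).card := by
  have himg : {c | c ∈ SkewCells β γ ∧ P c} = e '' {k : Fin n | P (e k)} := by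
    ext c
    simp only [Set.mem_setOf_eq, Set.mem_image]
    constructor
    · rintro ⟨hc, hPc⟩
      obtain ⟨k, rfl⟩ := he.2.2.1 c hc
      exact ⟨k, hPc, rfl⟩
    · rintro ⟨k, hk, rfl⟩
      exact ⟨he.1 k, hk⟩
  rw [himg, Set.ncard_image_of_injective _ he.2.1]
  have : {k : Fin n | P (e k)} = ↑(Finset.univ.filter fun k : Fin n => P (e k)) := by
    ext k; simp
  rw [this, Set.ncard_coe_finset]

lemma class_card (he : IsRowRead β γ e) (F : SkFilling α β γ) {u : ℕ} (hu : 1 ≤ u) :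
    (Finset.univ.filter fun k : Fin n => F.entry (e k) = u).card = α.f (u - 1) := by
  classical
  rw [← F.content u hu, ncard_filter_e he]

lemma entry_pos (he : IsRowRead β γ e) (F : SkFilling α β γ) (k : Fin n) :
    1 ≤ F.entry (e k) := F.pos_inside _ (he.1 k)

lemma std_block (hn : PartnOf α n) {F : SkFilling α β γ} {p : Perm (Fin n)}
    (hp : IsStdOf α F e p) (k : Fin n) :
    psum α (F.entry (e k) - 1) ≤ (p k : ℕ) ∧ (p k : ℕ) < psum α (F.entry (e k)) := by
  have h := hp.1 k
  obtain ⟨h1, h2, h3⟩ := blockIdx_spec hn (p k).isLt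
  rw [h] at h2 h3
  exact ⟨h2, h3⟩

/-- Characterization of the value of any standardization. -/
lemma std_val (hn : PartnOf α n) (he : IsRowRead β γ e) {F : SkFilling α β γ}
    {p : Perm (Fin n)} (hp : IsStdOf α F e p) (k : Fin n) :
    (p k : ℕ) = psum α (F.entry (e k) - 1)
      + (Finset.univ.filter fun j : Fin n => F.entry (e j) = F.entry (e k) ∧ j < k).card := by
  classical
  set u := F.entry (e k) with hu_def
  have hu : 1 ≤ u := entry_pos he F k
  obtain ⟨hbk1, hbk2⟩ := std_block hn hp k
  rw [← hu_def] at hbk1 hbk2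
  -- values of earlier same-letter positions inject into Ico (psum (u-1)) (p k)
  have hA : (Finset.univ.filter fun j : Fin n => F.entry (e j) = u ∧ j < k).card
      ≤ (p k : ℕ) - psum α (u - 1) := by
    have hmap : ∀ j ∈ (Finset.univ.filter fun j : Fin n => F.entry (e j) = u ∧ j < k),
        (p j : ℕ) ∈ Finset.Ico (psum α (u - 1)) (p k : ℕ) := by
      intro j hj
      rw [Finset.mem_filter] at hj
      obtain ⟨-, hjq, hjk⟩ := hj
      rw [Finset.mem_Ico]
      have hb := std_block hn hp j
      rw [hjq] at hb
      exact ⟨hb.1, hp.2 j k hjk hjq⟩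
    have hinj2 : Set.InjOn (fun j : Fin n => (p j : ℕ))
        ↑(Finset.univ.filter fun j : Fin n => F.entry (e j) = u ∧ j < k) :=
      fun j _ j' _ hjj => p.injective (Fin.ext hjj)
    have hcard := Finset.card_le_card_of_injOn _ hmap hinj2
    rwa [Nat.card_Ico] at hcard
  have hB : (Finset.univ.filter fun j : Fin n => F.entry (e j) = u ∧ k < j).card
      ≤ psum α u - (p k : ℕ) - 1 := by
    have hmap : ∀ j ∈ (Finset.univ.filter fun j : Fin n => F.entry (e j) = u ∧ k < j),
        (p j : ℕ) ∈ Finset.Ico ((p k : ℕ) + 1) (psum α u) := by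
      intro j hj
      rw [Finset.mem_filter] at hj
      obtain ⟨-, hjq, hjk⟩ := hj
      rw [Finset.mem_Ico]
      have hb := std_block hn hp j
      rw [hjq] at hb
      have : p k < p j := hp.2 k j hjk hjq.symm
      exact ⟨by omega, hb.2⟩
    have hinj2 : Set.InjOn (fun j : Fin n => (p j : ℕ))
        ↑(Finset.univ.filter fun j : Fin n => F.entry (e j) = u ∧ k < j) :=
      fun j _ j' _ hjj => p.injective (Fin.ext hjj)
    have hcard := Finset.card_le_card_of_injOn _ hmap hinj2
    rw [Nat.card_Ico] at hcard
    rw [Nat.sub_sub]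
    exact hcard
  have hsplit : (Finset.univ.filter fun j : Fin n => F.entry (e j) = u).card
      = (Finset.univ.filter fun j : Fin n => F.entry (e j) = u ∧ j < k).card
        + (Finset.univ.filter fun j : Fin n => F.entry (e j) = u ∧ k < j).card + 1 := by
    have hun : Finset.univ.filter (fun j : Fin n => F.entry (e j) = u)
        = ((Finset.univ.filter fun j : Fin n => F.entry (e j) = u ∧ j < k)
          ∪ (Finset.univ.filter fun j : Fin n => F.entry (e j) = u ∧ k < j)) ∪ {k} := by
      ext j
      simp only [Finset.mem_filter, Finset.mem_union, Finset.mem_singleton, Finset.mem_univ,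
        true_and]
      constructor
      · intro hj
        rcases lt_trichotomy j k with hc | hc | hc
        · exact Or.inl (Or.inl ⟨hj, hc⟩)
        · exact Or.inr hc
        · exact Or.inl (Or.inr ⟨hj, hc⟩)
      · rintro ((⟨h1, -⟩ | ⟨h1, -⟩) | rfl)
        · exact h1
        · exact h1
        · rfl
    rw [hun, Finset.card_union_of_disjoint, Finset.card_union_of_disjoint]
    · rw [Finset.card_singleton]
    · rw [Finset.disjoint_left]
      intro j hj hj'
      rw [Finset.mem_filter] at hj hj'
      exact absurd (hj.2.2.trans hj'.2.2) (lt_irrefl _)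
    · rw [Finset.disjoint_left]
      intro j hj hj'
      rw [Finset.mem_union, Finset.mem_filter, Finset.mem_filter] at hj
      rw [Finset.mem_singleton] at hj'
      subst hj'
      rcases hj with ⟨-, -, hc⟩ | ⟨-, -, hc⟩ <;> exact absurd hc (lt_irrefl _)
  rw [class_card he F hu] at hsplit
  have hps := psum_succ α hu
  omega

/-- Uniqueness of standardization. -/
lemma std_unique (hn : PartnOf α n) (he : IsRowRead β γ e) {F : SkFilling α β γ}
    {p p' : Perm (Fin n)} (hp : IsStdOf α F e p) (hp' : IsStdOf α F e p') : p = p' := by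
  apply Equiv.ext
  intro k
  apply Fin.ext
  rw [std_val hn he hp k, std_val hn he hp' k]

/-- Existence of standardization. -/
lemma std_exists (hn : PartnOf α n) (he : IsRowRead β γ e) (F : SkFilling α β γ) :
    ∃ p : Perm (Fin n), IsStdOf α F e p := by
  classical
  set rank := fun k : Fin n =>
    (Finset.univ.filter fun j : Fin n => F.entry (e j) = F.entry (e k) ∧ j < k).card with hrank
  set val := fun k : Fin n => psum α (F.entry (e k) - 1) + rank k with hval
  have hranklt : ∀ k : Fin n, rank k < α.f (F.entry (e k) - 1) := by
    intro k
    rw [← class_card he F (entry_pos he F k)]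
    apply Finset.card_lt_card
    rw [Finset.ssubset_iff_of_subset]
    · exact ⟨k, Finset.mem_filter.mpr ⟨Finset.mem_univ _, rfl⟩, by
        rw [Finset.mem_filter]
        rintro ⟨-, -, hc⟩
        exact absurd hc (lt_irrefl _)⟩
    · intro j hj
      rw [Finset.mem_filter] at hj ⊢
      exact ⟨hj.1, hj.2.1⟩
  have hvlt : ∀ k : Fin n, val k < n := by
    intro k
    have h1 := hranklt k
    have h2 := psum_succ α (entry_pos he F k)
    have h3 := psum_le_n hn (F.entry (e k))
    simp only [hval]
    omega
  have hrank_mono : ∀ k l : Fin n, k < l → F.entry (e k) = F.entry (e l) →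
      rank k < rank l := by
    intro k l hkl heq
    simp only [hrank]
    have hsub : insert k (Finset.univ.filter fun j : Fin n => F.entry (e j) = F.entry (e k) ∧ j < k)
        ⊆ Finset.univ.filter fun j : Fin n => F.entry (e j) = F.entry (e l) ∧ j < l := by
      intro j hj
      rcases Finset.mem_insert.mp hj with rfl | hj
      · exact Finset.mem_filter.mpr ⟨Finset.mem_univ _, heq, hkl⟩
      · rw [Finset.mem_filter] at hj ⊢
        exact ⟨hj.1, heq ▸ hj.2.1, hj.2.2.trans hkl⟩
    have hnot : k ∉ Finset.univ.filter fun j : Fin n => F.entry (e j) = F.entry (e k) ∧ j < k := by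
      rw [Finset.mem_filter]
      rintro ⟨-, -, hc⟩
      exact absurd hc (lt_irrefl _)
    have := Finset.card_le_card hsub
    rw [Finset.card_insert_of_notMem hnot] at this
    omega
  have hinj : Function.Injective (fun k : Fin n => (⟨val k, hvlt k⟩ : Fin n)) := by
    intro k l h
    have hvv : val k = val l := by
      have := congrArg Fin.val h
      simpa using this
    by_contra hne
    have main : ∀ k l : Fin n, k < l → val k ≠ val l := by
      intro k l hc
      rcases lt_trichotomy (F.entry (e k)) (F.entry (e l)) with hc2 | hc2 | hc2
      · have h1 := hranklt k
        have h2 := psum_succ α (entry_pos he F k)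
        have h3 : psum α (F.entry (e k)) ≤ psum α (F.entry (e l) - 1) :=
          psum_mono α (by omega)
        simp only [hval]
        omega
      · have := hrank_mono _ _ hc hc2
        simp only [hval, hc2]
        omega
      · have h1 := hranklt l
        have h2 := psum_succ α (entry_pos he F l)
        have h3 : psum α (F.entry (e l)) ≤ psum α (F.entry (e k) - 1) :=
          psum_mono α (by omega)
        simp only [hval]
        omega
    rcases lt_trichotomy k l with hc | hc | hc
    · exact main k l hc hvv
    · exact hne hc
    · exact main l k hc hvv.symm
  let pf : Fin n → Fin n := fun k => ⟨val k, hvlt k⟩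
  have hbij : Function.Bijective pf := Finite.injective_iff_bijective.mp hinj
  refine ⟨Equiv.ofBijective pf hbij, ?_, ?_⟩
  · intro k
    have : ((Equiv.ofBijective pf hbij) k : ℕ) = val k := rfl
    rw [this]
    apply blockIdx_eq hn (entry_pos he F k)
    · simp only [hval]; omega
    · have h1 := hranklt k
      have h2 := psum_succ α (entry_pos he F k)
      simp only [hval]
      omega
  · intro k l hkl heq
    have h := hrank_mono k l hkl heq
    show (⟨val k, hvlt k⟩ : Fin n) < ⟨val l, hvlt l⟩
    rw [Fin.lt_def]
    simp only [hval, heq]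
    omega

/-! ### Composition identities for cell swaps -/

lemma e_ne (he : IsRowRead β γ e) {k j : Fin n} (h : k ≠ j) : e k ≠ e j :=
  fun hc => h (he.2.1 hc)

lemma mkSwapC_comp1 (he : IsRowRead β γ e) (F : SkFilling α β γ) {k j l : Fin n}
    (hkj : k < j) (hjl : j < l) (hq : F.entry (e j) = F.entry (e k)) :
    mkSwapC F (e k) (e l) (he.1 k) (he.1 l)
      = mkSwapC (mkSwapC F (e j) (e l) (he.1 j) (he.1 l)) (e k) (e j) (he.1 k) (he.1 j) := by
  have hekj : e k ≠ e j := e_ne he (ne_of_lt hkj)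
  have hejl : e j ≠ e l := e_ne he (ne_of_lt hjl)
  have hekl : e k ≠ e l := e_ne he (ne_of_lt (hkj.trans hjl))
  apply skf_ext
  funext c
  simp only [mkSwapC_entry, Function.comp_apply]
  rcases eq_or_ne c (e k) with rfl | hck
  · simp [Equiv.swap_apply_def, hekj, hejl, hekl, hekj.symm, hejl.symm, hekl.symm, hq]
  · rcases eq_or_ne c (e j) with rfl | hcj
    · simp [Equiv.swap_apply_def, hekj, hejl, hekl, hekj.symm, hejl.symm, hekl.symm, hq]
    · rcases eq_or_ne c (e l) with rfl | hcl
      · simp [Equiv.swap_apply_def, hekj, hejl, hekl, hekj.symm, hejl.symm, hekl.symm, hq]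
      · simp [Equiv.swap_apply_def, hck, hcj, hcl, hekj, hejl, hekl, hekj.symm, hejl.symm,
          hekl.symm]

lemma mkSwapC_comp2 (he : IsRowRead β γ e) (F : SkFilling α β γ) {k j l : Fin n}
    (hkj : k < j) (hjl : j < l) (hq : F.entry (e j) = F.entry (e l)) :
    mkSwapC F (e k) (e l) (he.1 k) (he.1 l)
      = mkSwapC (mkSwapC F (e k) (e j) (he.1 k) (he.1 j)) (e j) (e l) (he.1 j) (he.1 l) := by
  have hekj : e k ≠ e j := e_ne he (ne_of_lt hkj)
  have hejl : e j ≠ e l := e_ne he (ne_of_lt hjl)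
  have hekl : e k ≠ e l := e_ne he (ne_of_lt (hkj.trans hjl))
  apply skf_ext
  funext c
  simp only [mkSwapC_entry, Function.comp_apply]
  rcases eq_or_ne c (e k) with rfl | hck
  · simp [Equiv.swap_apply_def, hekj, hejl, hekl, hekj.symm, hejl.symm, hekl.symm, hq]
  · rcases eq_or_ne c (e j) with rfl | hcj
    · simp [Equiv.swap_apply_def, hekj, hejl, hekl, hekj.symm, hejl.symm, hekl.symm, hq]
    · rcases eq_or_ne c (e l) with rfl | hcl
      · simp [Equiv.swap_apply_def, hekj, hejl, hekl, hekj.symm, hejl.symm, hekl.symm, hq]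
      · simp [Equiv.swap_apply_def, hck, hcj, hcl, hekj, hejl, hekl, hekj.symm, hejl.symm,
          hekl.symm]

lemma mkSwapC_comp3 (he : IsRowRead β γ e) (F : SkFilling α β γ) {k j l : Fin n}
    (hkj : k < j) (hjl : j < l) :
    mkSwapC F (e k) (e l) (he.1 k) (he.1 l)
      = mkSwapC (mkSwapC (mkSwapC F (e k) (e j) (he.1 k) (he.1 j)) (e j) (e l)
          (he.1 j) (he.1 l)) (e k) (e j) (he.1 k) (he.1 j) := by
  have hekj : e k ≠ e j := e_ne he (ne_of_lt hkj)
  have hejl : e j ≠ e l := e_ne he (ne_of_lt hjl)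
  have hekl : e k ≠ e l := e_ne he (ne_of_lt (hkj.trans hjl))
  apply skf_ext
  funext c
  simp only [mkSwapC_entry, Function.comp_apply]
  rcases eq_or_ne c (e k) with rfl | hck
  · simp [Equiv.swap_apply_def, hekj, hejl, hekl, hekj.symm, hejl.symm, hekl.symm]
  · rcases eq_or_ne c (e j) with rfl | hcj
    · simp [Equiv.swap_apply_def, hekj, hejl, hekl, hekj.symm, hejl.symm, hekl.symm]
    · rcases eq_or_ne c (e l) with rfl | hcl
      · simp [Equiv.swap_apply_def, hekj, hejl, hekl, hekj.symm, hejl.symm, hekl.symm]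
      · simp [Equiv.swap_apply_def, hck, hcj, hcl, hekj, hejl, hekl, hekj.symm, hejl.symm,
          hekl.symm]

/-! ### Lattice property of intermediate fillings -/

lemma lat_case1 (he : IsRowRead β γ e) {W : SkFilling α β γ} {k j l : Fin n}
    (hkj : k < j) (hjl : j < l)
    (hja : W.entry (e j) = W.entry (e k))
    (hlatW : Lat (fun m => W.entry (e m)))
    (hlatY : Lat (fun m => (mkSwapC W (e k) (e l) (he.1 k) (he.1 l)).entry (e m))) :
    Lat (fun m => (mkSwapC W (e j) (e l) (he.1 j) (he.1 l)).entry (e m)) := by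
  have hkjN : (k : ℕ) < (j : ℕ) := hkj
  have hjlN : (j : ℕ) < (l : ℕ) := hjl
  intro u t hu
  by_cases hin : (j : ℕ) < t ∧ t ≤ (l : ℕ)
  · have key : ∀ v, cnt (fun m => (mkSwapC W (e j) (e l) (he.1 j) (he.1 l)).entry (e m)) v t
        = cnt (fun m => (mkSwapC W (e k) (e l) (he.1 k) (he.1 l)).entry (e m)) v t := by
      intro v
      have h1 := cnt_swap_in he W (ne_of_lt hjl) hin.1 (by omega) v
      have h2 := cnt_swap_in he W (ne_of_lt (hkj.trans hjl)) (by omega : (k : ℕ) < t)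
        (by omega) v
      simp only [hja] at h1
      omega
    rw [key u, key (u - 1)]
    exact hlatY u t hu
  · have key : ∀ v, cnt (fun m => (mkSwapC W (e j) (e l) (he.1 j) (he.1 l)).entry (e m)) v t
        = cnt (fun m => W.entry (e m)) v t := by
      intro v
      exact cnt_swap_out he W (ne_of_lt hjl) (by constructor <;> (intro; omega)) v
    rw [key u, key (u - 1)]
    exact hlatW u t hu

lemma lat_case2 (he : IsRowRead β γ e) {W : SkFilling α β γ} {k j l : Fin n}
    (hkj : k < j) (hjl : j < l)
    (hjb : W.entry (e j) = W.entry (e l))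
    (hlatW : Lat (fun m => W.entry (e m)))
    (hlatY : Lat (fun m => (mkSwapC W (e k) (e l) (he.1 k) (he.1 l)).entry (e m))) :
    Lat (fun m => (mkSwapC W (e k) (e j) (he.1 k) (he.1 j)).entry (e m)) := by
  have hkjN : (k : ℕ) < (j : ℕ) := hkj
  have hjlN : (j : ℕ) < (l : ℕ) := hjl
  intro u t hu
  by_cases hin : (k : ℕ) < t ∧ t ≤ (j : ℕ)
  · have key : ∀ v, cnt (fun m => (mkSwapC W (e k) (e j) (he.1 k) (he.1 j)).entry (e m)) v t
        = cnt (fun m => (mkSwapC W (e k) (e l) (he.1 k) (he.1 l)).entry (e m)) v t := by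
      intro v
      have h1 := cnt_swap_in he W (ne_of_lt hkj) hin.1 (by omega) v
      have h2 := cnt_swap_in he W (ne_of_lt (hkj.trans hjl)) (by omega : (k : ℕ) < t)
        (by omega) v
      simp only [hjb] at h1
      omega
    rw [key u, key (u - 1)]
    exact hlatY u t hu
  · have key : ∀ v, cnt (fun m => (mkSwapC W (e k) (e j) (he.1 k) (he.1 j)).entry (e m)) v t
        = cnt (fun m => W.entry (e m)) v t := by
      intro v
      exact cnt_swap_out he W (ne_of_lt hkj) (by constructor <;> (intro; omega)) v
    rw [key u, key (u - 1)]
    exact hlatW u t hu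

lemma lat_caseU (he : IsRowRead β γ e) {W : SkFilling α β γ} {k j l : Fin n}
    (hkj : k < j) (hjl : j < l)
    (ha1 : 1 ≤ W.entry (e k))
    (had : W.entry (e k) < W.entry (e j)) (hdb : W.entry (e j) < W.entry (e l))
    (hnoA : ∀ m : Fin n, k < m → m < l → W.entry (e m) ≠ W.entry (e k))
    (hmin : ∀ m : Fin n, k < m → m < l →
      ¬(W.entry (e k) < W.entry (e m) ∧ W.entry (e m) < W.entry (e j)))
    (hlatW : Lat (fun m => W.entry (e m)))
    (hlatY : Lat (fun m => (mkSwapC W (e k) (e l) (he.1 k) (he.1 l)).entry (e m))) :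
    Lat (fun m => (mkSwapC W (e k) (e j) (he.1 k) (he.1 j)).entry (e m)) := by
  have hkjN : (k : ℕ) < (j : ℕ) := hkj
  have hjlN : (j : ℕ) < (l : ℕ) := hjl
  intro u t hu
  by_cases hin : (k : ℕ) < t ∧ t ≤ (j : ℕ)
  swap
  · have key : ∀ v, cnt (fun m => (mkSwapC W (e k) (e j) (he.1 k) (he.1 j)).entry (e m)) v t
        = cnt (fun m => W.entry (e m)) v t := by
      intro v
      exact cnt_swap_out he W (ne_of_lt hkj) (by constructor <;> (intro; omega)) v
    rw [key u, key (u - 1)]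
    exact hlatW u t hu
  have base : ∀ v, cnt (fun m => (mkSwapC W (e k) (e j) (he.1 k) (he.1 j)).entry (e m)) v t
        + (if W.entry (e k) = v then 1 else 0)
      = cnt (fun m => W.entry (e m)) v t + (if W.entry (e j) = v then 1 else 0) := by
    intro v
    exact cnt_swap_in he W (ne_of_lt hkj) hin.1 (by omega) v
  have hwj : (fun m => W.entry (e m)) j = W.entry (e j) := rfl
  have hcsucc : cnt (fun m => W.entry (e m)) (W.entry (e j)) t + 1
      ≤ cnt (fun m => W.entry (e m)) (W.entry (e j)) ((j : ℕ) + 1) :=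
    cnt_succ_mem _ hwj (by omega)
  by_cases h1 : u = W.entry (e j)
  · subst h1
    by_cases h2 : W.entry (e j) = W.entry (e k) + 1
    · -- d = a + 1 : use Y-lattice at j+1
      have hYin : ∀ v, cnt (fun m => (mkSwapC W (e k) (e l) (he.1 k) (he.1 l)).entry (e m)) v
            ((j : ℕ) + 1) + (if W.entry (e k) = v then 1 else 0)
          = cnt (fun m => W.entry (e m)) v ((j : ℕ) + 1)
            + (if W.entry (e l) = v then 1 else 0) := by
        intro v
        exact cnt_swap_in he W (ne_of_lt (hkj.trans hjl)) (by omega : (k : ℕ) < (j : ℕ) + 1)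
          (by omega) v
      have hYd := hYin (W.entry (e j))
      rw [if_neg (by omega), if_neg (by omega)] at hYd
      have hYa := hYin (W.entry (e k))
      rw [if_pos rfl, if_neg (by omega)] at hYa
      have hstab : cnt (fun m => W.entry (e m)) (W.entry (e k)) ((j : ℕ) + 1)
          = cnt (fun m => W.entry (e m)) (W.entry (e k)) t := by
        apply cnt_stable _ (by omega)
        intro m hm1 hm2
        exact hnoA m (Fin.lt_def.mpr (by omega)) (Fin.lt_def.mpr (by omega))
      have hYlat := hlatY (W.entry (e j)) ((j : ℕ) + 1) (by omega)
      have hidx : W.entry (e j) - 1 = W.entry (e k) := by omega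
      rw [hidx] at hYlat ⊢
      have hb1 := base (W.entry (e j))
      rw [if_neg (by omega), if_pos rfl] at hb1
      have hb2 := base (W.entry (e k))
      rw [if_pos rfl, if_neg (by omega)] at hb2
      omega
    · -- d - 1 > a
      have hstab : cnt (fun m => W.entry (e m)) (W.entry (e j) - 1) ((j : ℕ) + 1)
          = cnt (fun m => W.entry (e m)) (W.entry (e j) - 1) t := by
        apply cnt_stable _ (by omega)
        intro m hm1 hm2 hc
        exact hmin m (Fin.lt_def.mpr (by omega)) (Fin.lt_def.mpr (by omega))
          ⟨by omega, by omega⟩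
      have hWlat := hlatW (W.entry (e j)) ((j : ℕ) + 1) (by omega)
      have hb1 := base (W.entry (e j))
      rw [if_neg (by omega), if_pos rfl] at hb1
      have hb2 := base (W.entry (e j) - 1)
      rw [if_neg (by omega), if_neg (by omega)] at hb2
      omega
  · by_cases h2 : u = W.entry (e k)
    · subst h2
      have hb1 := base (W.entry (e k))
      rw [if_pos rfl, if_neg (by omega)] at hb1
      have hb2 := base (W.entry (e k) - 1)
      rw [if_neg (by omega), if_neg (by omega)] at hb2
      have hWlat := hlatW (W.entry (e k)) t hu
      omega
    · by_cases h3 : u = W.entry (e k) + 1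
      · subst h3
        have hb1 := base (W.entry (e k) + 1)
        rw [if_neg (by omega), if_neg (by omega)] at hb1
        have hb2 := base (W.entry (e k))
        rw [if_pos rfl, if_neg (by omega)] at hb2
        have hs1 : cnt (fun m => W.entry (e m)) (W.entry (e k) + 1) t
            = cnt (fun m => W.entry (e m)) (W.entry (e k) + 1) (k : ℕ) := by
          apply cnt_stable _ (by omega)
          intro m hm1 hm2
          rcases eq_or_lt_of_le hm1 with hc | hc
          · intro hcon
            have : m = k := Fin.ext hc.symm
            rw [this] at hcon
            omega
          · intro hcon
            exact hmin m (Fin.lt_def.mpr (by omega)) (Fin.lt_def.mpr (by omega))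
              ⟨by omega, by omega⟩
        have hs2 := hlatW (W.entry (e k) + 1) (k : ℕ) (by omega)
        have hs3 : cnt (fun m => W.entry (e m)) (W.entry (e k)) (k : ℕ) + 1
            ≤ cnt (fun m => W.entry (e m)) (W.entry (e k)) ((k : ℕ) + 1) :=
          cnt_succ_mem _ rfl (le_refl _)
        have hs4 : cnt (fun m => W.entry (e m)) (W.entry (e k)) ((k : ℕ) + 1)
            ≤ cnt (fun m => W.entry (e m)) (W.entry (e k)) t := cnt_mono _ _ (by omega)
        have hidx : W.entry (e k) + 1 - 1 = W.entry (e k) := by omega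
        rw [hidx] at hs2 ⊢
        omega
      · by_cases h4 : u = W.entry (e j) + 1
        · subst h4
          have hb1 := base (W.entry (e j) + 1)
          rw [if_neg (by omega), if_neg (by omega)] at hb1
          have hb2 := base (W.entry (e j))
          rw [if_neg (by omega), if_pos rfl] at hb2
          have hWlat := hlatW (W.entry (e j) + 1) t (by omega)
          have hidx : W.entry (e j) + 1 - 1 = W.entry (e j) := by omega
          rw [hidx] at hWlat ⊢
          omega
        · have hb1 := base u
          rw [if_neg (by omega), if_neg (by omega)] at hb1
          have hb2 := base (u - 1)
          rw [if_neg (by omega), if_neg (by omega)] at hb2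
          have hWlat := hlatW u t hu
          omega

lemma lat_caseU2 (he : IsRowRead β γ e) {W : SkFilling α β γ} {k j l : Fin n}
    (hkj : k < j) (hjl : j < l)
    (had : W.entry (e k) < W.entry (e j)) (hdb : W.entry (e j) < W.entry (e l))
    (hlatU : Lat (fun m => (mkSwapC W (e k) (e j) (he.1 k) (he.1 j)).entry (e m)))
    (hlatY : Lat (fun m => (mkSwapC W (e k) (e l) (he.1 k) (he.1 l)).entry (e m))) :
    Lat (fun m => (mkSwapC (mkSwapC W (e k) (e j) (he.1 k) (he.1 j)) (e j) (e l)
      (he.1 j) (he.1 l)).entry (e m)) := by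
  have hkjN : (k : ℕ) < (j : ℕ) := hkj
  have hjlN : (j : ℕ) < (l : ℕ) := hjl
  intro u t hu
  by_cases hin : (j : ℕ) < t ∧ t ≤ (l : ℕ)
  · have key : ∀ v,
        cnt (fun m => (mkSwapC (mkSwapC W (e k) (e j) (he.1 k) (he.1 j)) (e j) (e l)
          (he.1 j) (he.1 l)).entry (e m)) v t
        = cnt (fun m => (mkSwapC W (e k) (e l) (he.1 k) (he.1 l)).entry (e m)) v t := by
      intro v
      have h1 := cnt_swap_in he (mkSwapC W (e k) (e j) (he.1 k) (he.1 j))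
        (ne_of_lt hjl) hin.1 (by omega) v
      have hUj : (mkSwapC W (e k) (e j) (he.1 k) (he.1 j)).entry (e j) = W.entry (e k) := by
        rw [w_mkSwapC he, if_neg (Ne.symm (ne_of_lt hkj)), if_pos rfl]
      have hUl : (mkSwapC W (e k) (e j) (he.1 k) (he.1 j)).entry (e l) = W.entry (e l) := by
        rw [w_mkSwapC he, if_neg (ne_of_gt (hkj.trans hjl)), if_neg (ne_of_gt hjl)]
      rw [hUj, hUl] at h1
      have h2 : cnt (fun m => (mkSwapC W (e k) (e j) (he.1 k) (he.1 j)).entry (e m)) v t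
          = cnt (fun m => W.entry (e m)) v t :=
        cnt_swap_out he W (ne_of_lt hkj) (by constructor <;> (intro; omega)) v
      have h3 := cnt_swap_in he W (ne_of_lt (hkj.trans hjl)) (by omega : (k : ℕ) < t)
        (by omega) v
      omega
    rw [key u, key (u - 1)]
    exact hlatY u t hu
  · have key : ∀ v,
        cnt (fun m => (mkSwapC (mkSwapC W (e k) (e j) (he.1 k) (he.1 j)) (e j) (e l)
          (he.1 j) (he.1 l)).entry (e m)) v t
        = cnt (fun m => (mkSwapC W (e k) (e j) (he.1 k) (he.1 j)).entry (e m)) v t := by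
      intro v
      exact cnt_swap_out he (mkSwapC W (e k) (e j) (he.1 k) (he.1 j)) (ne_of_lt hjl)
        (by constructor <;> (intro; omega)) v
    rw [key u, key (u - 1)]
    exact hlatU u t hu

/-! ### The cover step increases length by exactly one -/

lemma cover_step (hrook : RookStrip β γ) (hsub : PartnSub γ β) (he : IsRowRead β γ e)
    (hn : PartnOf α n) {Y W : SkFilling α β γ} (hcov : CovBox Y W)
    {pY pW : Perm (Fin n)} (hpY : IsStdOf α Y e pY) (hpW : IsStdOf α W e pW) :
    inv pY = inv pW + 1 := by
  obtain ⟨hLRY, hLRW, hle, hneYW, hmax⟩ := hcov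
  have hsingle : BoxMove W Y := by
    rcases Relation.ReflTransGen.cases_tail hle with heq | ⟨b, hYb, hbW⟩
    · exact absurd heq.symm hneYW
    · obtain ⟨hLRb, hLRW', hmove⟩ := hbW
      rcases hmax b hLRb hYb (Relation.ReflTransGen.single ⟨hLRb, hLRW', hmove⟩)
        with rfl | rfl
      · exact hmove
      · exfalso
        obtain ⟨k, l, hkl2, hw2, hbeq⟩ := boxMove_elim hrook hsub he hmove
        have hTlt := T_mkSwap_lt he b hkl2 hw2
        rw [← hbeq] at hTlt
        exact absurd hTlt (lt_irrefl _)
  obtain ⟨k, l, hkl, hab, hYeq⟩ := boxMove_elim hrook hsub he hsingle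
  subst hYeq
  have hklN : (k : ℕ) < (l : ℕ) := hkl
  have hlatW : Lat (fun m => W.entry (e m)) := (isLRF_iff_lat hrook hsub he W).mp hLRW
  have hlatY : Lat (fun m => (mkSwapC W (e k) (e l) (he.1 k) (he.1 l)).entry (e m)) :=
    (isLRF_iff_lat hrook hsub he _).mp hLRY
  have hYk : (mkSwapC W (e k) (e l) (he.1 k) (he.1 l)).entry (e k) = W.entry (e l) := by
    rw [w_mkSwapC he, if_pos rfl]
  have hYl : (mkSwapC W (e k) (e l) (he.1 k) (he.1 l)).entry (e l) = W.entry (e k) := by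
    rw [w_mkSwapC he, if_neg (ne_of_gt hkl), if_pos rfl]
  have hYm : ∀ m : Fin n, m ≠ k → m ≠ l →
      (mkSwapC W (e k) (e l) (he.1 k) (he.1 l)).entry (e m) = W.entry (e m) := by
    intro m h1 h2
    rw [w_mkSwapC he, if_neg h1, if_neg h2]
  -- Step 1: no letter equal to `a` strictly between
  have hnoA : ∀ m : Fin n, k < m → m < l → W.entry (e m) ≠ W.entry (e k) := by
    intro j h1 h2 hc
    have hlatF1 := lat_case1 he h1 h2 hc hlatW hlatY
    have hLRF1 := (isLRF_iff_lat hrook hsub he _).mpr hlatF1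
    have hF1j : (mkSwapC W (e j) (e l) (he.1 j) (he.1 l)).entry (e j) = W.entry (e l) := by
      rw [w_mkSwapC he, if_pos rfl]
    have hF1k : (mkSwapC W (e j) (e l) (he.1 j) (he.1 l)).entry (e k) = W.entry (e k) := by
      rw [w_mkSwapC he, if_neg (ne_of_lt h1), if_neg (ne_of_lt (h1.trans h2))]
    have hF1l : (mkSwapC W (e j) (e l) (he.1 j) (he.1 l)).entry (e l) = W.entry (e j) := by
      rw [w_mkSwapC he, if_neg (ne_of_gt h2), if_pos rfl]
    have hmove1 : BoxMove W (mkSwapC W (e j) (e l) (he.1 j) (he.1 l)) :=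
      boxMove_mkSwap he W h2 (by rw [hc]; exact hab)
    have hcomp := mkSwapC_comp1 he W h1 h2 hc
    have hmove2 : BoxMove (mkSwapC W (e j) (e l) (he.1 j) (he.1 l))
        (mkSwapC W (e k) (e l) (he.1 k) (he.1 l)) := by
      rw [hcomp]
      exact boxMove_mkSwap he _ h1 (by rw [hF1k, hF1j]; exact hab)
    have hYleF1 : LeBox (mkSwapC W (e k) (e l) (he.1 k) (he.1 l))
        (mkSwapC W (e j) (e l) (he.1 j) (he.1 l)) :=
      Relation.ReflTransGen.single ⟨hLRY, hLRF1, hmove2⟩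
    have hF1leW : LeBox (mkSwapC W (e j) (e l) (he.1 j) (he.1 l)) W :=
      Relation.ReflTransGen.single ⟨hLRF1, hLRW, hmove1⟩
    rcases hmax _ hLRF1 hYleF1 hF1leW with hcY | hcW
    · have := congrArg (fun X : SkFilling α β γ => X.entry (e k)) hcY
      rw [hF1k, hYk] at this
      omega
    · have := congrArg (fun X : SkFilling α β γ => X.entry (e l)) hcW
      rw [hF1l] at this
      omega
  -- Step 2: no letter equal to `b` strictly between
  have hnoB : ∀ m : Fin n, k < m → m < l → W.entry (e m) ≠ W.entry (e l) := by
    intro j h1 h2 hc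
    have hlatF1 := lat_case2 he h1 h2 hc hlatW hlatY
    have hLRF1 := (isLRF_iff_lat hrook hsub he _).mpr hlatF1
    have hF1j : (mkSwapC W (e k) (e j) (he.1 k) (he.1 j)).entry (e j) = W.entry (e k) := by
      rw [w_mkSwapC he, if_neg (ne_of_gt h1), if_pos rfl]
    have hF1k : (mkSwapC W (e k) (e j) (he.1 k) (he.1 j)).entry (e k) = W.entry (e j) := by
      rw [w_mkSwapC he, if_pos rfl]
    have hF1l : (mkSwapC W (e k) (e j) (he.1 k) (he.1 j)).entry (e l) = W.entry (e l) := by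
      rw [w_mkSwapC he, if_neg (ne_of_gt (h1.trans h2)), if_neg (ne_of_gt h2)]
    have hmove1 : BoxMove W (mkSwapC W (e k) (e j) (he.1 k) (he.1 j)) :=
      boxMove_mkSwap he W h1 (by rw [hc]; exact hab)
    have hcomp := mkSwapC_comp2 he W h1 h2 hc
    have hmove2 : BoxMove (mkSwapC W (e k) (e j) (he.1 k) (he.1 j))
        (mkSwapC W (e k) (e l) (he.1 k) (he.1 l)) := by
      rw [hcomp]
      exact boxMove_mkSwap he _ h2 (by rw [hF1j, hF1l]; exact hab)
    have hYleF1 : LeBox (mkSwapC W (e k) (e l) (he.1 k) (he.1 l))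
        (mkSwapC W (e k) (e j) (he.1 k) (he.1 j)) :=
      Relation.ReflTransGen.single ⟨hLRY, hLRF1, hmove2⟩
    have hF1leW : LeBox (mkSwapC W (e k) (e j) (he.1 k) (he.1 j)) W :=
      Relation.ReflTransGen.single ⟨hLRF1, hLRW, hmove1⟩
    rcases hmax _ hLRF1 hYleF1 hF1leW with hcY | hcW
    · have := congrArg (fun X : SkFilling α β γ => X.entry (e l)) hcY
      rw [hF1l, hYl] at this
      omega
    · have := congrArg (fun X : SkFilling α β γ => X.entry (e k)) hcW
      rw [hF1k] at this
      omega
  -- Step 3: no letter strictly between a and b strictly between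
  have hnoMid : ∀ m : Fin n, k < m → m < l →
      ¬(W.entry (e k) < W.entry (e m) ∧ W.entry (e m) < W.entry (e l)) := by
    by_contra hcon
    push_neg at hcon
    obtain ⟨j0, hj01, hj02, hj03, hj04⟩ := hcon
    have hSne : {v : ℕ | W.entry (e k) < v ∧ v < W.entry (e l)
        ∧ ∃ m : Fin n, k < m ∧ m < l ∧ W.entry (e m) = v}.Nonempty :=
      ⟨W.entry (e j0), hj03, hj04, j0, hj01, hj02, rfl⟩
    obtain ⟨hd1, hd2, j, h1, h2, hjd⟩ := Nat.sInf_mem hSne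
    have hmin : ∀ m : Fin n, k < m → m < l →
        ¬(W.entry (e k) < W.entry (e m) ∧ W.entry (e m) < W.entry (e j)) := by
      rintro m hm1 hm2 ⟨hc1, hc2⟩
      rw [hjd] at hc2
      have hmem : W.entry (e m) ∈ {v : ℕ | W.entry (e k) < v ∧ v < W.entry (e l)
          ∧ ∃ m : Fin n, k < m ∧ m < l ∧ W.entry (e m) = v} :=
        ⟨hc1, by omega, m, hm1, hm2, rfl⟩
      have hge := Nat.sInf_le hmem
      omega
    have had : W.entry (e k) < W.entry (e j) := by rw [hjd]; exact hd1
    have hdb : W.entry (e j) < W.entry (e l) := by rw [hjd]; exact hd2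
    have hlatU := lat_caseU he h1 h2 (entry_pos he W k) had hdb hnoA hmin hlatW hlatY
    have hLRU := (isLRF_iff_lat hrook hsub he _).mpr hlatU
    have hlatU2 := lat_caseU2 he h1 h2 had hdb hlatU hlatY
    have hLRU2 := (isLRF_iff_lat hrook hsub he _).mpr hlatU2
    -- entries of U
    have hUk : (mkSwapC W (e k) (e j) (he.1 k) (he.1 j)).entry (e k) = W.entry (e j) := by
      rw [w_mkSwapC he, if_pos rfl]
    have hUj : (mkSwapC W (e k) (e j) (he.1 k) (he.1 j)).entry (e j) = W.entry (e k) := by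
      rw [w_mkSwapC he, if_neg (ne_of_gt h1), if_pos rfl]
    have hUl : (mkSwapC W (e k) (e j) (he.1 k) (he.1 j)).entry (e l) = W.entry (e l) := by
      rw [w_mkSwapC he, if_neg (ne_of_gt (h1.trans h2)), if_neg (ne_of_gt h2)]
    -- entries of U2
    have hU2k : (mkSwapC (mkSwapC W (e k) (e j) (he.1 k) (he.1 j)) (e j) (e l)
        (he.1 j) (he.1 l)).entry (e k) = W.entry (e j) := by
      rw [w_mkSwapC he, if_neg (ne_of_lt h1), if_neg (ne_of_lt (h1.trans h2)), hUk]
    have hU2j : (mkSwapC (mkSwapC W (e k) (e j) (he.1 k) (he.1 j)) (e j) (e l)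
        (he.1 j) (he.1 l)).entry (e j) = W.entry (e l) := by
      rw [w_mkSwapC he, if_pos rfl, hUl]
    have hmove1 : BoxMove W (mkSwapC W (e k) (e j) (he.1 k) (he.1 j)) :=
      boxMove_mkSwap he W h1 had
    have hmove2 : BoxMove (mkSwapC W (e k) (e j) (he.1 k) (he.1 j))
        (mkSwapC (mkSwapC W (e k) (e j) (he.1 k) (he.1 j)) (e j) (e l)
          (he.1 j) (he.1 l)) :=
      boxMove_mkSwap he _ h2 (by rw [hUj, hUl]; exact hab)
    have hcomp := mkSwapC_comp3 he W h1 h2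
    have hmove3 : BoxMove (mkSwapC (mkSwapC W (e k) (e j) (he.1 k) (he.1 j)) (e j) (e l)
          (he.1 j) (he.1 l)) (mkSwapC W (e k) (e l) (he.1 k) (he.1 l)) := by
      rw [hcomp]
      exact boxMove_mkSwap he _ h1 (by rw [hU2k, hU2j]; exact hdb)
    have hYleU : LeBox (mkSwapC W (e k) (e l) (he.1 k) (he.1 l))
        (mkSwapC W (e k) (e j) (he.1 k) (he.1 j)) :=
      Relation.ReflTransGen.tail (Relation.ReflTransGen.single ⟨hLRY, hLRU2, hmove3⟩)
        ⟨hLRU2, hLRU, hmove2⟩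
    have hUleW : LeBox (mkSwapC W (e k) (e j) (he.1 k) (he.1 j)) W :=
      Relation.ReflTransGen.single ⟨hLRU, hLRW, hmove1⟩
    rcases hmax _ hLRU hYleU hUleW with hcY | hcW
    · have := congrArg (fun X : SkFilling α β γ => X.entry (e k)) hcY
      rw [hUk, hYk] at this
      omega
    · have := congrArg (fun X : SkFilling α β γ => X.entry (e k)) hcW
      rw [hUk] at this
      omega
  -- Clean case: standardization relation and inversion count
  have hstdq : IsStdOf α (mkSwapC W (e k) (e l) (he.1 k) (he.1 l)) e
      (pW * Equiv.swap k l) := by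
    constructor
    · intro m
      rw [Perm.mul_apply]
      by_cases hmk : m = k
      · rw [hmk, Equiv.swap_apply_left, hYk]
        exact hpW.1 l
      · by_cases hml : m = l
        · rw [hml, Equiv.swap_apply_right, hYl]
          exact hpW.1 k
        · rw [Equiv.swap_apply_of_ne_of_ne hmk hml, hYm m hmk hml]
          exact hpW.1 m
    · intro m m' hmm' heq
      rw [Perm.mul_apply, Perm.mul_apply]
      by_cases hmk : m = k
      · rw [hmk] at hmm' heq ⊢
        have hm'k : m' ≠ k := ne_of_gt hmm'
        by_cases hm'l : m' = l
        · rw [hm'l] at heq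
          rw [hYk, hYl] at heq
          omega
        · rw [hYk, hYm m' hm'k hm'l] at heq
          rw [Equiv.swap_apply_left, Equiv.swap_apply_of_ne_of_ne hm'k hm'l]
          rcases lt_trichotomy m' l with hc | hc | hc
          · exact absurd heq.symm (hnoB m' hmm' hc)
          · exact absurd hc hm'l
          · exact hpW.2 l m' hc heq
      · by_cases hml : m = l
        · rw [hml] at hmm' heq ⊢
          have hm'k : m' ≠ k := ne_of_gt (hkl.trans hmm')
          have hm'l : m' ≠ l := ne_of_gt hmm'
          rw [hYl, hYm m' hm'k hm'l] at heq
          rw [Equiv.swap_apply_right, Equiv.swap_apply_of_ne_of_ne hm'k hm'l]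
          exact hpW.2 k m' (hkl.trans hmm') heq
        · by_cases hm'k : m' = k
          · rw [hm'k] at hmm' heq ⊢
            rw [hYm m hmk hml, hYk] at heq
            rw [Equiv.swap_apply_of_ne_of_ne hmk hml, Equiv.swap_apply_left]
            exact hpW.2 m l (hmm'.trans hkl) heq
          · by_cases hm'l : m' = l
            · rw [hm'l] at hmm' heq ⊢
              rw [hYm m hmk hml, hYl] at heq
              rw [Equiv.swap_apply_of_ne_of_ne hmk hml, Equiv.swap_apply_right]
              rcases lt_trichotomy m k with hc | hc | hc
              · exact hpW.2 m k hc heq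
              · exact absurd hc hmk
              · exact absurd heq (hnoA m hc hmm')
            · rw [hYm m hmk hml, hYm m' hm'k hm'l] at heq
              rw [Equiv.swap_apply_of_ne_of_ne hmk hml,
                Equiv.swap_apply_of_ne_of_ne hm'k hm'l]
              exact hpW.2 m m' hmm' heq
  have hpYq : pY = pW * Equiv.swap k l := std_unique hn he hpY hstdq
  rw [hpYq]
  apply inv_mul_swap_clean pW k l hkl
  · have hbk := std_block hn hpW k
    have hbl := std_block hn hpW l
    have hmono := psum_mono α (show W.entry (e k) ≤ W.entry (e l) - 1 by omega)
    exact Fin.lt_def.mpr (by omega)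
  · intro j h1 h2
    have hbk := std_block hn hpW k
    have hbl := std_block hn hpW l
    have hbj := std_block hn hpW j
    have hda : W.entry (e j) ≠ W.entry (e k) := hnoA j h1 h2
    have hdb : W.entry (e j) ≠ W.entry (e l) := hnoB j h1 h2
    have hdm := hnoMid j h1 h2
    rcases lt_or_gt_of_ne hda with hc | hc
    · left
      have hmono := psum_mono α (show W.entry (e j) ≤ W.entry (e k) - 1 by omega)
      exact Fin.lt_def.mpr (by omega)
    · right
      have hd2 : W.entry (e l) < W.entry (e j) := by
        rcases lt_trichotomy (W.entry (e j)) (W.entry (e l)) with hc2 | hc2 | hc2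
        · exact absurd ⟨hc, hc2⟩ hdm
        · exact absurd hc2 hdb
        · exact hc2
      have hmono := psum_mono α (show W.entry (e l) ≤ W.entry (e j) - 1 by omega)
      exact Fin.lt_def.mpr (by omega)

end Fill


end Aux

/-- for a rook strip, every saturated chain from `Z` up to `X` in
the box order has length `ℓ(π(Z)) − ℓ(π(X))`. -/
theorem stmt16 (n : ℕ) (α β γ : Partn) (hsub : PartnSub γ β) (hrook : RookStrip β γ)
    (hn : PartnOf α n) (e : Fin n → ℕ × ℕ) (he : IsRowRead β γ e)
    (X Z : SkFilling α β γ) (hX : IsLRF X) (hZ : IsLRF Z)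
    (px pz : Perm (Fin n)) (hpx : IsStdOf α X e px) (hpz : IsStdOf α Z e pz)
    (m : ℕ) (c : ℕ → SkFilling α β γ) (h0 : c 0 = Z) (hm : c m = X)
    (hcov : ∀ i, i < m → CovBox (c i) (c (i + 1))) :
    m = permLength pz - permLength px := by
  classical
  have hstd : ∀ i : ℕ, ∃ p : Perm (Fin n), IsStdOf α (c i) e p :=
    fun i => Aux.std_exists hn he (c i)
  choose P hP using hstd
  have hstep : ∀ i, i < m → Aux.inv (P i) = Aux.inv (P (i + 1)) + 1 := by
    intro i him
    exact Aux.cover_step hrook hsub he hn (hcov i him) (hP i) (hP (i + 1))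
  have htele : ∀ i, i ≤ m → Aux.inv (P 0) = Aux.inv (P i) + i := by
    intro i
    induction i with
    | zero => intro _; simp
    | succ i ih =>
      intro hi
      have h1 := ih (by omega)
      have h2 := hstep i (by omega)
      omega
  have hP0 : P 0 = pz := by
    have hstd0 := hP 0
    rw [h0] at hstd0
    exact Aux.std_unique hn he hstd0 hpz
  have hPm : P m = px := by
    have hstdm := hP m
    rw [hm] at hstdm
    exact Aux.std_unique hn he hstdm hpx
  have hfin := htele m le_rfl
  rw [hP0, hPm] at hfin
  rw [Aux.permLength_eq_inv, Aux.permLength_eq_inv]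
  omega
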